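/- arXiv:2411.00013 — 5 statements merged into one kernel-verified Lean document; each statement's English description precedes it below -/
import Mathlib

section
/- For all integers n ≥ 0, bt(4n+3) ≡ 0 (mod 4). -/
open PowerSeries

/-- Truncated version of `fₖ = ∏_{i≥1} (1 - q^{k i})`: the product over `1 ≤ i ≤ N`,
which has the same coefficients as the infinite product in degrees `≤ N`. -/
noncomputable def fTrunc (k N : ℕ) : PowerSeries ℤ :=
  ∏ i ∈ Finset.Icc 1 N, (1 - (PowerSeries.X : PowerSeries ℤ) ^ (k * i))

/-- `bt n` is the `n`-th coefficient of `f₄³ / (f₁⁶ f₂³)`, the number of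
overcubic partition triples of `n`. -/
noncomputable def bt (n : ℕ) : ℤ :=
  PowerSeries.coeff (R := ℤ) n
    ((fTrunc 4 n) ^ 3 * PowerSeries.invOfUnit ((fTrunc 1 n) ^ 6 * (fTrunc 2 n) ^ 3) 1)

noncomputable def geomSer (R : Type*) [CommRing R] (s : ℕ) : PowerSeries R :=
  PowerSeries.mk fun k => if s ∣ k then 1 else 0

lemma one_sub_X_pow_mul_geom {R : Type*} [CommRing R] {s : ℕ} (hs : 0 < s) :
    ((1 : PowerSeries R) - X ^ s) * geomSer R s = 1 := by
  ext n
  rw [sub_mul, one_mul, map_sub, PowerSeries.coeff_X_pow_mul', PowerSeries.coeff_one]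
  simp only [geomSer, PowerSeries.coeff_mk]
  by_cases hsn : s ≤ n
  · have hne : n ≠ 0 := by omega
    rw [if_pos hsn, if_neg hne]
    have hiff : s ∣ n ↔ s ∣ n - s := by
      constructor
      · exact fun h => Nat.dvd_sub h dvd_rfl
      · intro h
        have h2 : n - s + s = n := Nat.sub_add_cancel hsn
        exact h2 ▸ Nat.dvd_add h dvd_rfl
    by_cases hd : s ∣ n
    · rw [if_pos hd, if_pos (hiff.mp hd), sub_self]
    · rw [if_neg hd, if_neg (fun h => hd (hiff.mpr h)), sub_self]
  · rw [if_neg hsn, sub_zero]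
    by_cases hn : n = 0
    · subst hn; rw [if_pos (dvd_zero s), if_pos rfl]
    · rw [if_neg (fun h => absurd (Nat.le_of_dvd (Nat.pos_of_ne_zero hn) h) hsn), if_neg hn]

lemma coeff_X_pow_mul_geom {R : Type*} [CommRing R] (a s N : ℕ) :
    PowerSeries.coeff (R := R) N (X ^ a * geomSer R s) = if a ≤ N ∧ s ∣ (N - a) then 1 else 0 := by
  rw [PowerSeries.coeff_X_pow_mul']
  by_cases h1 : a ≤ N
  · rw [if_pos h1, geomSer, PowerSeries.coeff_mk]
    simp [h1]
  · rw [if_neg h1]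
    simp [h1]

lemma map_geomSer (s : ℕ) :
    PowerSeries.map (ZMod.castHom (by norm_num : (2:ℕ) ∣ 4) (ZMod 2)) (geomSer (ZMod 4) s)
      = geomSer (ZMod 2) s := by
  ext n
  rw [PowerSeries.coeff_map, geomSer, geomSer, PowerSeries.coeff_mk, PowerSeries.coeff_mk]
  split_ifs <;> simp <;> decide

lemma prod_add_two_mul {S : Type*} [CommRing S] (h : (2 : S) * 2 = 0) (s : Finset ℕ)
    (c d : ℕ → S) :
    ∏ j ∈ s, (c j + 2 * d j) =
      ∏ j ∈ s, c j + 2 * ∑ j ∈ s, d j * ∏ i ∈ s.erase j, c i := by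
  induction s using Finset.cons_induction with
  | empty => simp
  | cons a s ha ih =>
    rw [Finset.prod_cons, ih, Finset.prod_cons, Finset.sum_cons, Finset.erase_cons]
    have he2 : ∑ j ∈ s, d j * ∏ i ∈ (Finset.cons a s ha).erase j, c i
        = ∑ j ∈ s, d j * (c a * ∏ i ∈ s.erase j, c i) := by
      refine Finset.sum_congr rfl fun j hj => ?_
      rw [Finset.erase_cons_of_ne ha (fun hh => ha (hh ▸ hj)), Finset.prod_cons]
    have h3 : ∑ j ∈ s, d j * (c a * ∏ i ∈ s.erase j, c i)
        = c a * ∑ j ∈ s, d j * ∏ i ∈ s.erase j, c i := by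
      rw [Finset.mul_sum]; exact Finset.sum_congr rfl fun j _ => by ring
    rw [he2, h3]
    set P := ∏ j ∈ s, c j
    set T := ∑ j ∈ s, d j * ∏ i ∈ s.erase j, c i with hT
    linear_combination (d a * T) * h

lemma two_mul_eq_zero_of_map (x : PowerSeries (ZMod 4))
    (h : PowerSeries.map (ZMod.castHom (by norm_num : (2:ℕ) ∣ 4) (ZMod 2)) x = 0) :
    2 * x = 0 := by
  have key : ∀ c : ZMod 4, ZMod.castHom (by norm_num : (2:ℕ) ∣ 4) (ZMod 2) c = 0 →
      (2 : ZMod 4) * c = 0 := by decide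
  ext k
  have hc := congrArg (PowerSeries.coeff (R := ZMod 2) k) h
  rw [PowerSeries.coeff_map, map_zero] at hc
  rw [show (2 : PowerSeries (ZMod 4)) = PowerSeries.C (R := ZMod 4) 2 from (map_ofNat _ 2).symm,
    PowerSeries.coeff_C_mul, map_zero]
  exact key _ hc

lemma card_eq_card (m : ℕ) (hm : m % 4 = 3) :
    ((Finset.Icc 1 m).filter (fun j => 1 * j ≤ m ∧ 4 * j ∣ m - 1 * j)).card
      = ((Finset.Icc 1 m).filter (fun j => 3 * j ≤ m ∧ 4 * j ∣ m - 3 * j)).card := by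
  have hm0 : 0 < m := by omega
  have mem1 : ∀ j, j ∈ (Finset.Icc 1 m).filter (fun j => 1 * j ≤ m ∧ 4 * j ∣ m - 1 * j) ↔
      ∃ k, 0 < j ∧ m = j * (4 * k + 1) := by
    intro j
    simp only [Finset.mem_filter, Finset.mem_Icc, one_mul]
    constructor
    · rintro ⟨⟨h1, h2⟩, -, k, hk⟩
      exact ⟨k, by omega, by rw [show j * (4*k+1) = j + 4*j*k by ring]; omega⟩
    · rintro ⟨k, hj, hmm⟩
      have h1 : m = j + 4 * (j * k) := by rw [hmm]; ring
      refine ⟨⟨by omega, by omega⟩, by omega, k, by rw [show 4*j*k = 4*(j*k) by ring]; omega⟩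
  have mem2 : ∀ j, j ∈ (Finset.Icc 1 m).filter (fun j => 3 * j ≤ m ∧ 4 * j ∣ m - 3 * j) ↔
      ∃ k, 0 < j ∧ m = j * (4 * k + 3) := by
    intro j
    simp only [Finset.mem_filter, Finset.mem_Icc]
    constructor
    · rintro ⟨⟨h1, h2⟩, h3, k, hk⟩
      exact ⟨k, by omega, by rw [show j * (4*k+3) = 3*j + 4*j*k by ring]; omega⟩
    · rintro ⟨k, hj, hmm⟩
      have h1 : m = 3 * j + 4 * (j * k) := by rw [hmm]; ring
      refine ⟨⟨by omega, by omega⟩, by omega, k, by rw [show 4*j*k = 4*(j*k) by ring]; omega⟩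
  apply Finset.card_bij' (fun j _ => m / j) (fun j _ => m / j)
  · intro j hj
    obtain ⟨k, hj0, hmm⟩ := (mem1 j).mp hj
    have hdiv : m / j = 4 * k + 1 := by rw [hmm, Nat.mul_div_cancel_left _ hj0]
    rw [mem2, hdiv]
    have hlin : m = j + 4 * (j * k) := by rw [hmm]; ring
    have hj4 : j % 4 = 3 := by omega
    refine ⟨j / 4, by omega, ?_⟩
    have : j = 4 * (j / 4) + 3 := by omega
    rw [hmm]; nlinarith [this]
  · intro j hj
    obtain ⟨k, hj0, hmm⟩ := (mem2 j).mp hj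
    have hdiv : m / j = 4 * k + 3 := by rw [hmm, Nat.mul_div_cancel_left _ hj0]
    rw [mem1, hdiv]
    have hlin : m = 3 * j + 4 * (j * k) := by rw [hmm]; ring
    have hj4 : j % 4 = 1 := by omega
    refine ⟨j / 4, by omega, ?_⟩
    have : j = 4 * (j / 4) + 1 := by omega
    rw [hmm]; nlinarith [this]
  · intro j hj
    obtain ⟨k, hj0, hmm⟩ := (mem1 j).mp hj
    exact Nat.div_div_self ⟨_, hmm⟩ (by omega)
  · intro j hj
    obtain ⟨k, hj0, hmm⟩ := (mem2 j).mp hj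
    exact Nat.div_div_self ⟨_, hmm⟩ (by omega)

lemma key (m : ℕ) (hm : m % 4 = 3) (Dinv : PowerSeries (ZMod 4))
    (hDinv : (∏ i ∈ Finset.Icc 1 m, (1 - (X : PowerSeries (ZMod 4)) ^ (1 * i))) ^ 6 *
        (∏ i ∈ Finset.Icc 1 m, (1 - (X : PowerSeries (ZMod 4)) ^ (2 * i))) ^ 3 * Dinv = 1) :
    PowerSeries.coeff (R := ZMod 4) m
      ((∏ i ∈ Finset.Icc 1 m, (1 - (X : PowerSeries (ZMod 4)) ^ (4 * i))) ^ 3 * Dinv) = 0 := by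
  have hm0 : 0 < m := by omega
  set π : ZMod 4 →+* ZMod 2 := ZMod.castHom (by norm_num : (2:ℕ) ∣ 4) (ZMod 2) with hπ
  set A := ∏ i ∈ Finset.Icc 1 m, (1 - (X : PowerSeries (ZMod 4)) ^ (1 * i)) with hA
  set B := ∏ i ∈ Finset.Icc 1 m, (1 - (X : PowerSeries (ZMod 4)) ^ (2 * i)) with hB
  set Cs := ∏ i ∈ Finset.Icc 1 m, (1 - (X : PowerSeries (ZMod 4)) ^ (4 * i)) with hCs
  set T := ∑ j ∈ Finset.Icc 1 m, ((X : PowerSeries (ZMod 4)) ^ (3 * j) - X ^ (1 * j)) *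
      ∏ i ∈ (Finset.Icc 1 m).erase j, (1 - X ^ (4 * i)) with hT
  set Sg := ∑ j ∈ Finset.Icc 1 m, ((X : PowerSeries (ZMod 4)) ^ (1 * j) + X ^ (3 * j)) *
      geomSer (ZMod 4) (4 * j) with hSg
  have h4 : (4 : PowerSeries (ZMod 4)) = 0 := by
    rw [show (4 : PowerSeries (ZMod 4)) = PowerSeries.C (R := ZMod 4) 4 from (map_ofNat _ 4).symm,
      show (4 : ZMod 4) = 0 from by decide, map_zero]
  have h2 : (2 : PowerSeries (ZMod 4)) * 2 = 0 := by linear_combination h4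
  have hxp : ∀ (a i : ℕ), (X : PowerSeries (ZMod 4)) ^ (a * i) = ((X : PowerSeries (ZMod 4)) ^ i) ^ a :=
    fun a i => by rw [mul_comm, pow_mul]
  have hA4 : A ^ 4 = B ^ 2 := by
    rw [hA, hB, ← Finset.prod_pow, ← Finset.prod_pow]
    refine Finset.prod_congr rfl fun i _ => ?_
    rw [hxp 1, hxp 2]
    generalize (X : PowerSeries (ZMod 4)) ^ i = y
    linear_combination (2*y^2 - y - y^3) * h4
  have hB4 : B ^ 4 = Cs ^ 2 := by
    rw [hB, hCs, ← Finset.prod_pow, ← Finset.prod_pow]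
    refine Finset.prod_congr rfl fun i _ => ?_
    rw [hxp 2, hxp 4]
    generalize (X : PowerSeries (ZMod 4)) ^ i = y
    linear_combination (2*y^4 - y^2 - y^6) * h4
  have hE : (A ^ 2 * B) * (Cs ^ 2 * Dinv) = 1 := by
    have hD2 : A ^ 6 * B ^ 3 = A ^ 2 * B * Cs ^ 2 := by
      linear_combination (B^3 * A^2) * hA4 + (A^2 * B) * hB4
    rw [show (A^2*B) * (Cs^2*Dinv) = (A^2*B*Cs^2) * Dinv by ring, ← hD2, hDinv]
  have hCT : A ^ 2 * B = Cs + 2 * T := by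
    calc A ^ 2 * B = ∏ i ∈ Finset.Icc 1 m,
          ((1 - (X : PowerSeries (ZMod 4)) ^ (1*i)) ^ 2 * (1 - X ^ (2*i))) := by
          rw [hA, hB, ← Finset.prod_pow, ← Finset.prod_mul_distrib]
      _ = ∏ i ∈ Finset.Icc 1 m,
          ((1 - (X : PowerSeries (ZMod 4)) ^ (4*i)) + 2 * (X ^ (3*i) - X ^ (1*i))) := by
          refine Finset.prod_congr rfl fun i _ => ?_
          rw [hxp 1, hxp 2, hxp 3, hxp 4]
          ring
      _ = Cs + 2 * T := by
          rw [prod_add_two_mul h2 (Finset.Icc 1 m)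
            (fun i => 1 - (X : PowerSeries (ZMod 4)) ^ (4*i))
            (fun i => X ^ (3*i) - X ^ (1*i)), hCs, hT]
  have hbar : PowerSeries.map π (T + Cs * Sg) = 0 := by
    have hC2 : PowerSeries.map π Cs
        = ∏ i ∈ Finset.Icc 1 m, (1 - (X : PowerSeries (ZMod 2)) ^ (4*i)) := by
      rw [hCs, map_prod]
      exact Finset.prod_congr rfl fun i _ => by rw [map_sub, map_one, map_pow, PowerSeries.map_X]
    have hT2 : PowerSeries.map π T
        = ∑ j ∈ Finset.Icc 1 m, ((X : PowerSeries (ZMod 2)) ^ (3*j) - X ^ (1*j)) *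
            ∏ i ∈ (Finset.Icc 1 m).erase j, (1 - X ^ (4*i)) := by
      rw [hT, map_sum]
      refine Finset.sum_congr rfl fun j hj => ?_
      rw [map_mul, map_sub, map_pow, map_pow, PowerSeries.map_X, map_prod]
      congr 1
      exact Finset.prod_congr rfl fun i _ => by rw [map_sub, map_one, map_pow, PowerSeries.map_X]
    have hSg2 : PowerSeries.map π Sg
        = ∑ j ∈ Finset.Icc 1 m, ((X : PowerSeries (ZMod 2)) ^ (1*j) + X ^ (3*j)) *
            geomSer (ZMod 2) (4*j) := by
      rw [hSg, map_sum]
      refine Finset.sum_congr rfl fun j hj => ?_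
      rw [map_mul, map_add, map_pow, map_pow, PowerSeries.map_X, hπ, map_geomSer]
    rw [map_add, map_mul, hT2, hC2, hSg2, Finset.mul_sum, ← Finset.sum_add_distrib]
    refine Finset.sum_eq_zero fun j hj => ?_
    have hj1 : 1 ≤ j := (Finset.mem_Icc.mp hj).1
    have hgeom : ((1 : PowerSeries (ZMod 2)) - X ^ (4*j)) * geomSer (ZMod 2) (4*j) = 1 :=
      one_sub_X_pow_mul_geom (by omega)
    have hCsplit : ∏ i ∈ Finset.Icc 1 m, (1 - (X : PowerSeries (ZMod 2)) ^ (4*i))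
        = (1 - X ^ (4*j)) * ∏ i ∈ (Finset.Icc 1 m).erase j, (1 - X ^ (4*i)) :=
      (Finset.mul_prod_erase _ _ hj).symm
    have h2' : (2 : PowerSeries (ZMod 2)) = 0 := by
      rw [show (2 : PowerSeries (ZMod 2)) = PowerSeries.C (R := ZMod 2) 2 from (map_ofNat _ 2).symm,
        show (2 : ZMod 2) = 0 from by decide, map_zero]
    rw [hCsplit]
    set P := ∏ i ∈ (Finset.Icc 1 m).erase j, (1 - (X : PowerSeries (ZMod 2)) ^ (4*i)) with hP
    linear_combination ((X^(1*j) + X^(3*j)) * P) * hgeom + ((X : PowerSeries (ZMod 2))^(3*j) * P) * h2'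
  have hmain : (A ^ 2 * B) * (1 + 2 * Sg) = Cs := by
    have hker : 2 * (T + Cs * Sg) = 0 := two_mul_eq_zero_of_map _ hbar
    rw [hCT]
    linear_combination hker + (T * Sg) * h4
  have hG : Cs ^ 3 * Dinv = 1 + 2 * Sg := by
    calc Cs ^ 3 * Dinv = Cs * (Cs ^ 2 * Dinv) := by ring
      _ = ((A ^ 2 * B) * (1 + 2 * Sg)) * (Cs ^ 2 * Dinv) := by rw [hmain]
      _ = (1 + 2 * Sg) * ((A ^ 2 * B) * (Cs ^ 2 * Dinv)) := by ring
      _ = 1 + 2 * Sg := by rw [hE, mul_one]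
  rw [hG, map_add, PowerSeries.coeff_one, if_neg (by omega),
    show (2 : PowerSeries (ZMod 4)) * Sg = PowerSeries.C (R := ZMod 4) 2 * Sg from by rw [map_ofNat],
    PowerSeries.coeff_C_mul, hSg, map_sum]
  have hco : ∀ j ∈ Finset.Icc 1 m,
      PowerSeries.coeff (R := ZMod 4) m (((X : PowerSeries (ZMod 4)) ^ (1*j) + X ^ (3*j)) *
        geomSer (ZMod 4) (4*j))
      = (if 1*j ≤ m ∧ 4*j ∣ m - 1*j then 1 else 0) +
        (if 3*j ≤ m ∧ 4*j ∣ m - 3*j then 1 else 0) := by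
    intro j _
    rw [add_mul, map_add, coeff_X_pow_mul_geom, coeff_X_pow_mul_geom]
  rw [Finset.sum_congr rfl hco, Finset.sum_add_distrib, Finset.sum_boole, Finset.sum_boole,
    card_eq_card m hm]
  set c := ((Finset.Icc 1 m).filter fun j => 3 * j ≤ m ∧ 4 * j ∣ m - 3 * j).card
  rw [zero_add]
  calc (2 : ZMod 4) * ((c : ZMod 4) + (c : ZMod 4)) = ((4 * c : ℕ) : ZMod 4) := by
        push_cast; ring
    _ = 0 := by rw [Nat.cast_mul, show ((4:ℕ) : ZMod 4) = 0 from by decide, zero_mul]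

theorem stmt1 (n : ℕ) : bt (4 * n + 3) ≡ 0 [ZMOD 4] := by
  rw [show (4:ℤ) = ((4:ℕ):ℤ) from by norm_num, ← ZMod.intCast_eq_intCast_iff, Int.cast_zero]
  set m := 4 * n + 3 with hm
  set φ : ℤ →+* ZMod 4 := Int.castRingHom (ZMod 4) with hφ
  have hmap : ∀ k, PowerSeries.map φ (fTrunc k m)
      = ∏ i ∈ Finset.Icc 1 m, (1 - (X : PowerSeries (ZMod 4)) ^ (k * i)) := by
    intro k
    rw [fTrunc, map_prod]
    exact Finset.prod_congr rfl fun i _ => by rw [map_sub, map_one, map_pow, PowerSeries.map_X]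
  have h1 : ((bt m : ℤ) : ZMod 4) = PowerSeries.coeff (R := ZMod 4) m
      (PowerSeries.map φ ((fTrunc 4 m) ^ 3 *
        PowerSeries.invOfUnit ((fTrunc 1 m) ^ 6 * (fTrunc 2 m) ^ 3) 1)) := by
    rw [PowerSeries.coeff_map]
    simp only [bt]
    rfl
  have hc : ∀ k, 0 < k → PowerSeries.constantCoeff (R := ℤ) (fTrunc k m) = 1 := by
    intro k hk
    rw [fTrunc, map_prod]
    refine Finset.prod_eq_one fun i hi => ?_
    have h1i : 1 ≤ i := (Finset.mem_Icc.mp hi).1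
    rw [map_sub, map_one, map_pow, PowerSeries.constantCoeff_X,
      zero_pow (Nat.mul_ne_zero (by omega) (by omega)), sub_zero]
  have hZ : ((fTrunc 1 m) ^ 6 * (fTrunc 2 m) ^ 3) *
      PowerSeries.invOfUnit ((fTrunc 1 m) ^ 6 * (fTrunc 2 m) ^ 3) 1 = 1 :=
    PowerSeries.mul_invOfUnit _ 1 (by
      rw [map_mul, map_pow, map_pow, hc 1 one_pos, hc 2 two_pos]; simp)
  have hD : (∏ i ∈ Finset.Icc 1 m, (1 - (X : PowerSeries (ZMod 4)) ^ (1 * i))) ^ 6 *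
      (∏ i ∈ Finset.Icc 1 m, (1 - (X : PowerSeries (ZMod 4)) ^ (2 * i))) ^ 3 *
      PowerSeries.map φ (PowerSeries.invOfUnit ((fTrunc 1 m) ^ 6 * (fTrunc 2 m) ^ 3) 1) = 1 := by
    have h := congrArg (PowerSeries.map φ) hZ
    rw [map_mul, map_mul, map_pow, map_pow, map_one, hmap 1, hmap 2] at h
    exact h
  rw [h1, map_mul, map_pow, hmap 4]
  exact key m (by omega) _ hD
end

section
/- For all integers n ≥ 0, bt(8n+6) ≡ 0 (mod 4). -/
open PowerSeries Finset

variable {R : Type*} [CommRing R]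

noncomputable def geomS (R : Type*) [CommRing R] (s : ℕ) : PowerSeries R :=
  PowerSeries.mk fun m => if s ∣ m then 1 else 0

lemma geomS_spec (s : ℕ) (hs : 0 < s) : (1 - X ^ s) * geomS R s = 1 := by
  ext m
  rw [sub_mul, one_mul, map_sub, coeff_X_pow_mul']
  simp only [geomS, coeff_mk, PowerSeries.coeff_one]
  rcases Nat.eq_zero_or_pos m with rfl | hm
  · rw [if_pos (dvd_zero s), if_neg (by omega), if_pos rfl]; ring
  · rw [if_neg hm.ne']
    split_ifs with h1 h2 h3 h2 h3
    · ring
    · exact absurd (Nat.dvd_sub h1 dvd_rfl) h3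
    · exact absurd (Nat.le_of_dvd hm h1) h2
    · exact absurd ((Nat.sub_add_cancel h2) ▸ Nat.dvd_add h3 dvd_rfl) h1
    · ring
    · ring

lemma inv_unique' {x y z : PowerSeries R} (hx : x * z = 1) (hy : y * z = 1) : x = y := by
  calc x = x * (y * z) := by rw [hy, mul_one]
  _ = y * (x * z) := by ring
  _ = y := by rw [hx, mul_one]

lemma cancel_right {x y z w : PowerSeries R} (hz : z * w = 1) (h : x * z = y * z) : x = y := by
  calc x = x * (z * w) := by rw [hz, mul_one]
  _ = (x * z) * w := by ring
  _ = (y * z) * w := by rw [h]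
  _ = y * (z * w) := by ring
  _ = y := by rw [hz, mul_one]

lemma prod_add_two (h4 : (2 : R) * 2 = 0) (s : Finset ℕ) (u v : ℕ → R) :
    ∏ i ∈ s, (u i + 2 * v i)
      = ∏ i ∈ s, u i + 2 * ∑ i ∈ s, v i * ∏ j ∈ s.erase i, u j := by
  induction s using Finset.induction_on with
  | empty => simp
  | insert a s ha ih =>
    rw [Finset.prod_insert ha, Finset.prod_insert ha, Finset.sum_insert ha, ih,
      Finset.erase_insert ha]
    have he : ∀ i ∈ s, v i * ∏ j ∈ (insert a s).erase i, u j
        = u a * (v i * ∏ j ∈ s.erase i, u j) := by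
      intro i hi
      rw [Finset.erase_insert_of_ne (by rintro rfl; exact ha hi),
        Finset.prod_insert (fun hmem => ha (Finset.mem_of_mem_erase hmem))]
      ring
    rw [Finset.sum_congr rfl he, ← Finset.mul_sum]
    set P := ∏ i ∈ s, u i
    set S := ∑ i ∈ s, v i * ∏ j ∈ s.erase i, u j
    linear_combination (v a * S) * h4

lemma sqC (h2 : (2 : PowerSeries R) = 0) (x : PowerSeries R) :
    (1 - x) ^ 2 = 1 - x ^ 2 := by linear_combination (x ^ 2 - x) * h2

lemma key1 (h2 : (2 : PowerSeries R) = 0) (g1 g4 x : PowerSeries R)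
    (hg1 : (1 - x) * g1 = 1) (hg4 : (1 - x ^ 4) * g4 = 1) :
    (x ^ 2 - x) * (1 - x ^ 2) * g4 = g1 - 1 := by
  apply cancel_right (z := 1 - x ^ 4) (w := g4) hg4
  have e1 : (g1 - 1) * (1 - x ^ 4) = (1 - x) ^ 3 - (1 - x) ^ 4 := by
    have e0 : (1 : PowerSeries R) - x ^ 4 = (1 - x) ^ 4 := by
      linear_combination (2 * x - 3 * x ^ 2 + 2 * x ^ 3 - x ^ 4) * h2
    rw [e0]
    calc (g1 - 1) * (1 - x) ^ 4 = ((1 - x) * g1) * (1 - x) ^ 3 - (1 - x) ^ 4 := by ring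
    _ = (1 - x) ^ 3 - (1 - x) ^ 4 := by rw [hg1, one_mul]
  rw [e1]
  calc (x ^ 2 - x) * (1 - x ^ 2) * g4 * (1 - x ^ 4)
      = (x ^ 2 - x) * (1 - x ^ 2) * ((1 - x ^ 4) * g4) := by ring
  _ = (x ^ 2 - x) * (1 - x ^ 2) := by rw [hg4, mul_one]
  _ = (1 - x) ^ 3 - (1 - x) ^ 4 := by linear_combination (2 * x ^ 2 - x ^ 3 - x) * h2

lemma key2 (h2 : (2 : PowerSeries R) = 0) (g2 g4 x : PowerSeries R)
    (hg2 : (1 - x ^ 2) * g2 = 1) (hg4 : (1 - x ^ 4) * g4 = 1) :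
    (x ^ 4 - x ^ 2) * g4 = g2 - 1 := by
  apply cancel_right (z := 1 - x ^ 4) (w := g4) hg4
  have e1 : (g2 - 1) * (1 - x ^ 4) = (1 + x ^ 2) - (1 - x ^ 4) := by
    calc (g2 - 1) * (1 - x ^ 4) = ((1 - x ^ 2) * g2) * (1 + x ^ 2) - (1 - x ^ 4) := by ring
    _ = (1 + x ^ 2) - (1 - x ^ 4) := by rw [hg2, one_mul]
  rw [e1]
  calc (x ^ 4 - x ^ 2) * g4 * (1 - x ^ 4) = (x ^ 4 - x ^ 2) * ((1 - x ^ 4) * g4) := by ring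
  _ = (x ^ 4 - x ^ 2) := by rw [hg4, mul_one]
  _ = (1 + x ^ 2) - (1 - x ^ 4) := by linear_combination (-x ^ 2) * h2

lemma zmod2_main (h2 : (2 : PowerSeries R) = 0) (N : ℕ) (w : PowerSeries R)
    (hw : (∏ j ∈ Finset.Icc 1 N, (1 - X ^ (4 * j))) * w = 1) :
    (∑ i ∈ Finset.Icc 1 N, (X ^ (4 * i) - X ^ (2 * i))
        * ∏ j ∈ (Finset.Icc 1 N).erase i, (1 - X ^ (4 * j))) * w
      + (∑ i ∈ Finset.Icc 1 N, (X ^ (2 * i) - X ^ i)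
        * ∏ j ∈ (Finset.Icc 1 N).erase i, (1 - X ^ (2 * j)))
        * ((∏ j ∈ Finset.Icc 1 N, (1 - X ^ (2 * j))) * w)
      = ∑ i ∈ Finset.Icc 1 N, ((geomS R (2 * i) - 1) + (geomS R i - 1)) := by
  rw [Finset.sum_mul, Finset.sum_mul, ← Finset.sum_add_distrib]
  apply Finset.sum_congr rfl
  intro i hi
  have hi1 : 1 ≤ i := (Finset.mem_Icc.mp hi).1
  -- powers of X^i
  have p2 : (X : PowerSeries R) ^ (2 * i) = (X ^ i) ^ 2 := by
    rw [mul_comm 2 i, pow_mul]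
  have p4 : (X : PowerSeries R) ^ (4 * i) = (X ^ i) ^ 4 := by
    rw [show 4 * i = i * 4 by ring, pow_mul]
  have p24 : (X : PowerSeries R) ^ (4 * i) = (X ^ (2 * i)) ^ 2 := by
    rw [show 4 * i = (2 * i) * 2 by ring, pow_mul]
  have Qw : (∏ j ∈ (Finset.Icc 1 N).erase i, (1 - X ^ (4 * j))) * w = geomS R (4 * i) := by
    apply inv_unique' (z := 1 - X ^ (4 * i))
    · calc (∏ j ∈ (Finset.Icc 1 N).erase i, (1 - X ^ (4 * j))) * w * (1 - X ^ (4 * i))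
          = ((1 - X ^ (4 * i)) * ∏ j ∈ (Finset.Icc 1 N).erase i, (1 - X ^ (4 * j))) * w := by
            ring
      _ = (∏ j ∈ Finset.Icc 1 N, (1 - X ^ (4 * j))) * w := by
            rw [Finset.mul_prod_erase _ (fun j => (1 : PowerSeries R) - X ^ (4 * j)) hi]
      _ = 1 := hw
    · rw [mul_comm]; exact geomS_spec _ (by omega)
  have hg1 : ((1 : PowerSeries R) - X ^ i) * geomS R i = 1 := geomS_spec _ (by omega)
  have hg2 : ((1 : PowerSeries R) - (X ^ i) ^ 2) * geomS R (2 * i) = 1 := by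
    rw [← p2]; exact geomS_spec _ (by omega)
  have hg4 : ((1 : PowerSeries R) - (X ^ i) ^ 4) * geomS R (4 * i) = 1 := by
    rw [← p4]; exact geomS_spec _ (by omega)
  -- first summand
  have e2 : (X ^ (4 * i) - X ^ (2 * i))
      * (∏ j ∈ (Finset.Icc 1 N).erase i, (1 - X ^ (4 * j))) * w = geomS R (2 * i) - 1 := by
    rw [mul_assoc, Qw, p2, p4]
    exact key2 h2 _ _ _ hg2 hg4
  -- second summand
  have e1 : (X ^ (2 * i) - X ^ i)
      * (∏ j ∈ (Finset.Icc 1 N).erase i, (1 - X ^ (2 * j)))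
      * ((∏ j ∈ Finset.Icc 1 N, (1 - X ^ (2 * j))) * w) = geomS R i - 1 := by
    have hb : (∏ j ∈ Finset.Icc 1 N, ((1 : PowerSeries R) - X ^ (2 * j)))
        = (1 - X ^ (2 * i)) * ∏ j ∈ (Finset.Icc 1 N).erase i, (1 - X ^ (2 * j)) :=
      (Finset.mul_prod_erase _ (fun j => (1 : PowerSeries R) - X ^ (2 * j)) hi).symm
    have hsq : (∏ j ∈ (Finset.Icc 1 N).erase i, ((1 : PowerSeries R) - X ^ (2 * j))) ^ 2
        = ∏ j ∈ (Finset.Icc 1 N).erase i, (1 - X ^ (4 * j)) := by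
      rw [← Finset.prod_pow]
      apply Finset.prod_congr rfl
      intro j _
      rw [sqC h2, ← pow_mul, show 2 * j * 2 = 4 * j by ring]
    calc (X ^ (2 * i) - X ^ i)
        * (∏ j ∈ (Finset.Icc 1 N).erase i, (1 - X ^ (2 * j)))
        * ((∏ j ∈ Finset.Icc 1 N, (1 - X ^ (2 * j))) * w)
        = (X ^ (2 * i) - X ^ i) * (1 - X ^ (2 * i))
          * ((∏ j ∈ (Finset.Icc 1 N).erase i, (1 - X ^ (2 * j))) ^ 2 * w) := by
          rw [hb]; ring
      _ = (X ^ (2 * i) - X ^ i) * (1 - X ^ (2 * i)) * geomS R (4 * i) := by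
          rw [hsq, Qw]
      _ = geomS R i - 1 := by
          rw [p2]
          exact key1 h2 _ _ _ hg1 hg4
  rw [e2, e1]

lemma zmod4_main (h4 : (2 : PowerSeries R) * 2 = 0) (N : ℕ)
    (u w : PowerSeries R)
    (hu : ((∏ i ∈ Finset.Icc 1 N, (1 - X ^ i)) ^ 6
      * (∏ i ∈ Finset.Icc 1 N, (1 - X ^ (2 * i))) ^ 3) * u = 1)
    (hw : (∏ i ∈ Finset.Icc 1 N, ((1 : PowerSeries R) - X ^ (4 * i))) * w = 1) :
    (∏ i ∈ Finset.Icc 1 N, ((1 : PowerSeries R) - X ^ (4 * i))) ^ 3 * u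
      = 1 + 2 * ((∑ i ∈ Finset.Icc 1 N, (X ^ (4 * i) - X ^ (2 * i))
          * ∏ j ∈ (Finset.Icc 1 N).erase i, (1 - X ^ (4 * j))) * w
        + (∑ i ∈ Finset.Icc 1 N, (X ^ (2 * i) - X ^ i)
          * ∏ j ∈ (Finset.Icc 1 N).erase i, (1 - X ^ (2 * j)))
          * ((∏ j ∈ Finset.Icc 1 N, (1 - X ^ (2 * j))) * w)) := by
  set a : PowerSeries R := ∏ i ∈ Finset.Icc 1 N, (1 - X ^ i) with ha
  set b : PowerSeries R := ∏ i ∈ Finset.Icc 1 N, (1 - X ^ (2 * i)) with hb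
  set c : PowerSeries R := ∏ i ∈ Finset.Icc 1 N, (1 - X ^ (4 * i)) with hc
  set T : PowerSeries R := ∑ i ∈ Finset.Icc 1 N, (X ^ (2 * i) - X ^ i)
      * ∏ j ∈ (Finset.Icc 1 N).erase i, (1 - X ^ (2 * j)) with hT
  set T2 : PowerSeries R := ∑ i ∈ Finset.Icc 1 N, (X ^ (4 * i) - X ^ (2 * i))
      * ∏ j ∈ (Finset.Icc 1 N).erase i, (1 - X ^ (4 * j)) with hT2
  have h1 : a ^ 4 = b ^ 2 := by
    rw [ha, hb, ← Finset.prod_pow, ← Finset.prod_pow]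
    apply Finset.prod_congr rfl
    intro i _
    rw [show (X : PowerSeries R) ^ (2 * i) = (X ^ i) ^ 2 by rw [mul_comm 2 i, pow_mul]]
    linear_combination (-((X : PowerSeries R) ^ i) + 2 * (X ^ i) ^ 2 - (X ^ i) ^ 3) * h4
  have h2b : b ^ 4 = c ^ 2 := by
    rw [hb, hc, ← Finset.prod_pow, ← Finset.prod_pow]
    apply Finset.prod_congr rfl
    intro i _
    rw [show (X : PowerSeries R) ^ (4 * i) = (X ^ (2 * i)) ^ 2 by
      rw [show 4 * i = 2 * i * 2 by ring, pow_mul]]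
    linear_combination (-((X : PowerSeries R) ^ (2 * i)) + 2 * (X ^ (2 * i)) ^ 2
      - (X ^ (2 * i)) ^ 3) * h4
  have key : c ^ 3 * u = a ^ 2 * b * w := by
    apply cancel_right (z := a ^ 6 * b ^ 3 * c) (w := u * w)
    · calc a ^ 6 * b ^ 3 * c * (u * w) = (a ^ 6 * b ^ 3 * u) * (c * w) := by ring
      _ = 1 := by rw [hu, hw, mul_one]
    · calc c ^ 3 * u * (a ^ 6 * b ^ 3 * c) = c ^ 4 * (a ^ 6 * b ^ 3 * u) := by ring
      _ = c ^ 4 := by rw [hu, mul_one]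
      _ = a ^ 8 * b ^ 4 := by
          linear_combination (-(a ^ 4 + b ^ 2) * b ^ 4) * h1 - (b ^ 4 + c ^ 2) * h2b
      _ = a ^ 8 * b ^ 4 * (c * w) := by rw [hw, mul_one]
      _ = a ^ 2 * b * w * (a ^ 6 * b ^ 3 * c) := by ring
  have expand1 : a ^ 2 = b + 2 * T := by
    rw [ha, hb, hT, ← Finset.prod_pow,
      show (∏ i ∈ Finset.Icc 1 N, ((1 : PowerSeries R) - X ^ i) ^ 2)
        = ∏ i ∈ Finset.Icc 1 N, ((1 - X ^ (2 * i)) + 2 * (X ^ (2 * i) - X ^ i)) from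
        Finset.prod_congr rfl fun i _ => by
          rw [show (X : PowerSeries R) ^ (2 * i) = (X ^ i) ^ 2 by rw [mul_comm 2 i, pow_mul]]
          ring]
    exact prod_add_two h4 _ _ _
  have expand2 : b ^ 2 = c + 2 * T2 := by
    rw [hb, hc, hT2, ← Finset.prod_pow,
      show (∏ i ∈ Finset.Icc 1 N, ((1 : PowerSeries R) - X ^ (2 * i)) ^ 2)
        = ∏ i ∈ Finset.Icc 1 N, ((1 - X ^ (4 * i)) + 2 * (X ^ (4 * i) - X ^ (2 * i))) from
        Finset.prod_congr rfl fun i _ => by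
          rw [show (X : PowerSeries R) ^ (4 * i) = (X ^ (2 * i)) ^ 2 by
            rw [show 4 * i = 2 * i * 2 by ring, pow_mul]]
          ring]
    exact prod_add_two h4 _ _ _
  rw [key, expand1]
  linear_combination w * expand2 + hw

lemma evenA (M : ℕ) (hM : M % 2 = 1) :
    Even ((Finset.Icc 1 (2 * M)).filter (fun i => i ∣ 2 * M)).card := by
  set S := (Finset.Icc 1 (2 * M)).filter (fun i => i ∣ 2 * M) with hS
  have hsplit := Finset.card_filter_add_card_filter_not
    (s := S) (p := fun i => i % 2 = 1)
  have hbij : (S.filter (fun i => i % 2 = 1)).card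
      = (S.filter (fun a => ¬ a % 2 = 1)).card := by
    refine Finset.card_bij (fun e _ => 2 * e) ?_ ?_ ?_
    · intro e he
      beta_reduce
      rw [hS, Finset.mem_filter, Finset.mem_filter, Finset.mem_Icc] at he
      obtain ⟨⟨⟨he1, he2⟩, hdvd⟩, hodd⟩ := he
      have hcop : Nat.Coprime e 2 :=
        Nat.coprime_comm.mp ((Nat.prime_two.coprime_iff_not_dvd).mpr (by omega))
      have heM : e ∣ M := hcop.dvd_of_dvd_mul_left hdvd
      have := Nat.le_of_dvd (by omega) heM
      refine Finset.mem_filter.mpr ⟨?_, by omega⟩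
      rw [hS]
      exact Finset.mem_filter.mpr ⟨Finset.mem_Icc.mpr ⟨by omega, by omega⟩,
        mul_dvd_mul_left 2 heM⟩
    · intro a1 h1 a2 h2 h; beta_reduce at h; omega
    · intro f hf
      rw [hS, Finset.mem_filter, Finset.mem_filter, Finset.mem_Icc] at hf
      obtain ⟨⟨⟨hf1, hf2⟩, hdvd⟩, hodd⟩ := hf
      obtain ⟨g, hg⟩ : 2 ∣ f := by omega
      subst hg
      have hgM : g ∣ M := (Nat.mul_dvd_mul_iff_left (by norm_num : 0 < 2)).mp hdvd
      have hg2 : g % 2 = 1 := by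
        rcases Nat.even_or_odd g with hg2 | hg2
        · exfalso
          obtain ⟨t, ht⟩ := hg2
          have h2M : (2 : ℕ) ∣ M := dvd_trans ⟨t, by omega⟩ hgM
          omega
        · rw [Nat.odd_iff] at hg2; exact hg2
      refine ⟨g, ?_, by beta_reduce; rfl⟩
      refine Finset.mem_filter.mpr ⟨?_, hg2⟩
      rw [hS]
      exact Finset.mem_filter.mpr ⟨Finset.mem_Icc.mpr ⟨by omega, by omega⟩, hgM.mul_left 2⟩
  exact ⟨(S.filter (fun i => i % 2 = 1)).card, by omega⟩

lemma evenB (M : ℕ) (hM : M % 4 = 3) :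
    Even ((Finset.Icc 1 M).filter (fun i => i ∣ M)).card := by
  set S := (Finset.Icc 1 M).filter (fun i => i ∣ M) with hS
  have hall : ∀ i ∈ S, i % 4 = 1 ∨ i % 4 = 3 := by
    intro i hi
    rw [hS, Finset.mem_filter, Finset.mem_Icc] at hi
    obtain ⟨⟨hi1, hi2⟩, hdvd⟩ := hi
    have : i % 2 = 1 := by
      rcases Nat.even_or_odd i with h | h
      · exfalso
        obtain ⟨t, ht⟩ := h
        have h2M : (2 : ℕ) ∣ M := dvd_trans ⟨t, by omega⟩ hdvd
        omega
      · rw [Nat.odd_iff] at h; exact h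
    omega
  have hsplit := Finset.card_filter_add_card_filter_not
    (s := S) (p := fun i => i % 4 = 1)
  have hinv : ∀ e, e ∈ S → e % 4 = 1 → (M / e ∈ S ∧ M / e % 4 = 3 ∧ M / (M / e) = e) := by
    intro e heS he4
    simp only [hS, Finset.mem_filter, Finset.mem_Icc] at heS
    obtain ⟨⟨he1, he2⟩, hdvd⟩ := heS
    have hMe : e * (M / e) = M := Nat.mul_div_cancel' hdvd
    have hdvd2 : M / e ∣ M := Nat.div_dvd_of_dvd hdvd
    have hpos : 1 ≤ M / e := Nat.one_le_div_iff (by omega) |>.mpr he2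
    have hle : M / e ≤ M := Nat.div_le_self M e
    have hmod : M / e % 4 = 3 := by
      have h1 : M % 4 = e % 4 * (M / e % 4) % 4 := by rw [← Nat.mul_mod, hMe]
      rw [he4] at h1
      omega
    refine ⟨?_, hmod, Nat.div_div_self hdvd (by omega)⟩
    simp only [hS, Finset.mem_filter, Finset.mem_Icc]
    exact ⟨⟨hpos, hle⟩, hdvd2⟩
  have hinv' : ∀ e, e ∈ S → e % 4 = 3 → (M / e ∈ S ∧ M / e % 4 = 1 ∧ M / (M / e) = e) := by
    intro e heS he4
    simp only [hS, Finset.mem_filter, Finset.mem_Icc] at heS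
    obtain ⟨⟨he1, he2⟩, hdvd⟩ := heS
    have hMe : e * (M / e) = M := Nat.mul_div_cancel' hdvd
    have hdvd2 : M / e ∣ M := Nat.div_dvd_of_dvd hdvd
    have hpos : 1 ≤ M / e := Nat.one_le_div_iff (by omega) |>.mpr he2
    have hle : M / e ≤ M := Nat.div_le_self M e
    have hmod : M / e % 4 = 1 := by
      have h1 : M % 4 = e % 4 * (M / e % 4) % 4 := by rw [← Nat.mul_mod, hMe]
      rw [he4] at h1
      omega
    refine ⟨?_, hmod, Nat.div_div_self hdvd (by omega)⟩
    simp only [hS, Finset.mem_filter, Finset.mem_Icc]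
    exact ⟨⟨hpos, hle⟩, hdvd2⟩
  have hbij : (S.filter (fun i => i % 4 = 1)).card
      = (S.filter (fun a => ¬ a % 4 = 1)).card := by
    apply Finset.card_bij' (fun e _ => M / e) (fun f _ => M / f)
    · intro e he
      rw [Finset.mem_filter] at he ⊢
      obtain ⟨heS, he4⟩ := he
      obtain ⟨h1, h2, _⟩ := hinv e heS he4
      exact ⟨h1, by omega⟩
    · intro f hf
      rw [Finset.mem_filter] at hf ⊢
      obtain ⟨hfS, hf4⟩ := hf
      have hf3 : f % 4 = 3 := by rcases hall f hfS with h | h <;> omega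
      obtain ⟨h1, h2, _⟩ := hinv' f hfS hf3
      exact ⟨h1, by omega⟩
    · intro e he
      rw [Finset.mem_filter] at he
      exact (hinv e he.1 he.2).2.2
    · intro f hf
      rw [Finset.mem_filter] at hf
      have hf3 : f % 4 = 3 := by rcases hall f hf.1 with h | h <;> omega
      exact (hinv' f hf.1 hf3).2.2
  exact ⟨(S.filter (fun i => i % 4 = 1)).card, by omega⟩

lemma constCoeff_prod (R : Type*) [CommRing R] (k N : ℕ) (hk : 0 < k) :
    constantCoeff (R := R) (∏ i ∈ Finset.Icc 1 N, (1 - X ^ (k * i))) = 1 := by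
  rw [map_prod]
  apply Finset.prod_eq_one
  intro i hi
  have hi1 : 1 ≤ i := (Finset.mem_Icc.mp hi).1
  rw [map_sub, map_one, map_pow, constantCoeff_X, zero_pow (by positivity), sub_zero]

lemma map_fTrunc {S : Type*} [CommRing S] (ρ : ℤ →+* S) (k N : ℕ) :
    PowerSeries.map ρ (fTrunc k N) = ∏ i ∈ Finset.Icc 1 N, (1 - X ^ (k * i)) := by
  rw [fTrunc, map_prod]
  apply Finset.prod_congr rfl
  intro i _
  rw [map_sub, map_one, map_pow, PowerSeries.map_X]

lemma even_cast_zmod2 (k : ℕ) (h : Even k) : (k : ZMod 2) = 0 := by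
  obtain ⟨t, rfl⟩ := h
  push_cast
  rw [← two_mul, show (2 : ZMod 2) = 0 by decide, zero_mul]

lemma zmod4_add_self (x : ZMod 4)
    (h : ZMod.castHom (by norm_num : (2:ℕ) ∣ 4) (ZMod 2) x = 0) : x + x = 0 := by
  revert x
  decide

theorem stmt3 (n : ℕ) : bt (8 * n + 6) ≡ 0 [ZMOD 4] := by
  set N := 8 * n + 6 with hNdef
  have hN0 : ¬ N = 0 := by omega
  -- char facts
  have h4 : (2 : PowerSeries (ZMod 4)) * 2 = 0 := by
    rw [← map_ofNat (C (R := ZMod 4)) 2, ← map_mul,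
      show (2 : ZMod 4) * 2 = 0 by decide, map_zero]
  have h2 : (2 : PowerSeries (ZMod 2)) = 0 := by
    rw [← map_ofNat (C (R := ZMod 2)) 2, show (2 : ZMod 2) = 0 by decide, map_zero]
  let ρ : ℤ →+* ZMod 4 := Int.castRingHom (ZMod 4)
  let ψ : ZMod 4 →+* ZMod 2 := ZMod.castHom (by norm_num : (2:ℕ) ∣ 4) (ZMod 2)
  -- constant coefficients
  have hc1 : constantCoeff (R := ℤ) (fTrunc 1 N) = 1 := by
    simp only [fTrunc]; exact constCoeff_prod ℤ 1 N one_pos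
  have hc2 : constantCoeff (R := ℤ) (fTrunc 2 N) = 1 := by
    simp only [fTrunc]; exact constCoeff_prod ℤ 2 N (by norm_num)
  -- U
  set U : PowerSeries (ZMod 4) :=
    PowerSeries.map ρ (PowerSeries.invOfUnit ((fTrunc 1 N) ^ 6 * (fTrunc 2 N) ^ 3) 1) with hU
  have hgU : ((∏ i ∈ Finset.Icc 1 N, ((1 : PowerSeries (ZMod 4)) - X ^ i)) ^ 6
      * (∏ i ∈ Finset.Icc 1 N, (1 - X ^ (2 * i))) ^ 3) * U = 1 := by
    have hmain := PowerSeries.mul_invOfUnit ((fTrunc 1 N) ^ 6 * (fTrunc 2 N) ^ 3) 1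
      (by rw [map_mul, map_pow, map_pow, hc1, hc2]; norm_num)
    have hmap := congrArg (PowerSeries.map ρ) hmain
    rw [map_one, map_mul, map_mul, map_pow, map_pow, map_fTrunc, map_fTrunc] at hmap
    simpa [one_mul] using hmap
  -- W
  set W : PowerSeries (ZMod 4) :=
    PowerSeries.invOfUnit (∏ i ∈ Finset.Icc 1 N, (1 - X ^ (4 * i))) 1 with hW
  have hCcW : (∏ i ∈ Finset.Icc 1 N, ((1 : PowerSeries (ZMod 4)) - X ^ (4 * i))) * W = 1 :=
    PowerSeries.mul_invOfUnit _ _ (by rw [constCoeff_prod _ 4 N (by norm_num)]; rfl)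
  have E := zmod4_main h4 N U W hgU hCcW
  -- cast bt
  have hbt : ((bt N : ℤ) : ZMod 4)
      = coeff (R := ZMod 4) N ((∏ i ∈ Finset.Icc 1 N, ((1 : PowerSeries (ZMod 4)) - X ^ (4 * i))) ^ 3 * U) := by
    have hmapF : PowerSeries.map ρ
        ((fTrunc 4 N) ^ 3 * PowerSeries.invOfUnit ((fTrunc 1 N) ^ 6 * (fTrunc 2 N) ^ 3) 1)
        = (∏ i ∈ Finset.Icc 1 N, ((1 : PowerSeries (ZMod 4)) - X ^ (4 * i))) ^ 3 * U := by
      rw [map_mul, map_pow, map_fTrunc]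
    rw [show bt N = PowerSeries.coeff (R := ℤ) N
      ((fTrunc 4 N) ^ 3 * PowerSeries.invOfUnit ((fTrunc 1 N) ^ 6 * (fTrunc 2 N) ^ 3) 1) from rfl,
      ← hmapF, PowerSeries.coeff_map]
    rfl
  rw [E, two_mul, map_add, map_add, PowerSeries.coeff_one, if_neg hN0] at hbt
  set Y : PowerSeries (ZMod 4) :=
    (∑ i ∈ Finset.Icc 1 N, (X ^ (4 * i) - X ^ (2 * i))
      * ∏ j ∈ (Finset.Icc 1 N).erase i, (1 - X ^ (4 * j))) * W
    + (∑ i ∈ Finset.Icc 1 N, (X ^ (2 * i) - X ^ i)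
      * ∏ j ∈ (Finset.Icc 1 N).erase i, (1 - X ^ (2 * j)))
      * ((∏ j ∈ Finset.Icc 1 N, (1 - X ^ (2 * j))) * W) with hY
  -- mod 2 computation
  have hx2 : ψ (coeff (R := ZMod 4) N Y) = 0 := by
    rw [← PowerSeries.coeff_map]
    have hW2 : (∏ i ∈ Finset.Icc 1 N, ((1 : PowerSeries (ZMod 2)) - X ^ (4 * i)))
        * PowerSeries.map ψ W = 1 := by
      have hmap := congrArg (PowerSeries.map ψ) hCcW
      rw [map_one, map_mul, map_prod] at hmap
      simpa [map_sub, map_pow, map_one, PowerSeries.map_X] using hmap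
    have hmapY : PowerSeries.map ψ Y
        = (∑ i ∈ Finset.Icc 1 N, (X ^ (4 * i) - X ^ (2 * i))
            * ∏ j ∈ (Finset.Icc 1 N).erase i, (1 - X ^ (4 * j))) * PowerSeries.map ψ W
          + (∑ i ∈ Finset.Icc 1 N, (X ^ (2 * i) - X ^ i)
            * ∏ j ∈ (Finset.Icc 1 N).erase i, (1 - X ^ (2 * j)))
            * ((∏ j ∈ Finset.Icc 1 N, (1 - X ^ (2 * j))) * PowerSeries.map ψ W) := by
      rw [hY]
      simp [map_add, map_mul, map_sum, map_prod, map_sub, map_pow, PowerSeries.map_X, map_one]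
    rw [hmapY, zmod2_main h2 N (PowerSeries.map ψ W) hW2, map_sum]
    have hterm : ∀ i ∈ Finset.Icc 1 N,
        coeff (R := ZMod 2) N ((geomS (ZMod 2) (2 * i) - 1) + (geomS (ZMod 2) i - 1))
          = (if 2 * i ∣ N then 1 else 0) + (if i ∣ N then 1 else 0) := by
      intro i _
      rw [map_add, map_sub, map_sub, PowerSeries.coeff_one, if_neg hN0]
      simp only [geomS, coeff_mk]
      ring
    rw [Finset.sum_congr rfl hterm, Finset.sum_add_distrib, Finset.sum_boole, Finset.sum_boole]
    have h26 : N = 2 * (4 * n + 3) := by omega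
    have hs2 : (Finset.Icc 1 N).filter (fun i => 2 * i ∣ N)
        = (Finset.Icc 1 (4 * n + 3)).filter (fun i => i ∣ (4 * n + 3)) := by
      ext i
      simp only [Finset.mem_filter, Finset.mem_Icc]
      constructor
      · rintro ⟨⟨hi1, hi2⟩, hd⟩
        have hdd : i ∣ 4 * n + 3 :=
          (Nat.mul_dvd_mul_iff_left (by norm_num : 0 < 2)).mp (h26 ▸ hd)
        exact ⟨⟨hi1, Nat.le_of_dvd (by omega) hdd⟩, hdd⟩
      · rintro ⟨⟨hi1, hi2⟩, hd⟩
        refine ⟨⟨hi1, by omega⟩, ?_⟩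
        rw [h26]
        exact mul_dvd_mul_left 2 hd
    have hev1 : Even ((Finset.Icc 1 N).filter (fun i => i ∣ N)).card := by
      rw [h26]
      exact evenA (4 * n + 3) (by omega)
    have hev2 : Even ((Finset.Icc 1 N).filter (fun i => 2 * i ∣ N)).card := by
      rw [hs2]
      exact evenB (4 * n + 3) (by omega)
    rw [even_cast_zmod2 _ hev2, even_cast_zmod2 _ hev1, add_zero]
  -- conclude
  have hfin : ((bt N : ℤ) : ZMod 4) = 0 := by
    rw [hbt, zero_add]
    exact zmod4_add_self _ hx2
  exact Int.modEq_zero_iff_dvd.mpr ((ZMod.intCast_zmod_eq_zero_iff_dvd _ 4).mp hfin)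
end

section
/- For all integers n ≥ 0, bt(2n) ≡ bt(n) (mod 4). -/
open PowerSeries

namespace OCPT

open Finset

abbrev P := PowerSeries (ZMod 4)

lemma h4 : (4 : P) = 0 := by
  have h : (4 : P) = PowerSeries.C (4 : ZMod 4) := (map_ofNat _ 4).symm
  rw [h, show (4 : ZMod 4) = 0 from by decide, map_zero]

/-- geometric-type series: inverse of `1 - X^j`. -/
noncomputable def g (j : ℕ) : P := PowerSeries.invOfUnit (1 - X ^ j) 1

lemma hg (j : ℕ) (hj : 0 < j) : ((1 : P) - X ^ j) * g j = 1 :=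
  mul_invOfUnit _ 1 (by simp [hj.ne'])

lemma g_eq (j : ℕ) (hj : 0 < j) :
    g j = PowerSeries.mk fun m => if j ∣ m then (1 : ZMod 4) else 0 := by
  set M : P := PowerSeries.mk fun m => if j ∣ m then (1 : ZMod 4) else 0 with hM
  have h2 : ((1 : P) - X ^ j) * M = 1 := by
    ext m
    rw [sub_mul, one_mul, map_sub, coeff_X_pow_mul']
    rcases Nat.eq_zero_or_pos m with hm | hm
    · subst hm
      simp [hM, hj.ne']
    · by_cases hle : j ≤ m
      · have hiff : j ∣ m - j ↔ j ∣ m := by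
          constructor
          · intro h
            have h' := Nat.dvd_add h (dvd_refl j)
            rwa [Nat.sub_add_cancel hle] at h'
          · intro h; exact Nat.dvd_sub h dvd_rfl
        by_cases hd : j ∣ m
        · simp [hM, coeff_mk, hd, hle, hiff.mpr hd, PowerSeries.coeff_one, hm.ne']
        · have hnd : ¬ j ∣ m - j := fun h => hd (hiff.mp h)
          simp [hM, coeff_mk, hd, hle, hnd, PowerSeries.coeff_one, hm.ne']
      · have hd : ¬ j ∣ m := fun h => hle (Nat.le_of_dvd hm h)
        simp [hM, coeff_mk, hd, hle, PowerSeries.coeff_one, hm.ne']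
  calc g j = (((1 : P) - X ^ j) * M) * g j := by rw [h2, one_mul]
    _ = M * (((1 : P) - X ^ j) * g j) := by ring
    _ = M := by rw [hg j hj, mul_one]

lemma coeff_X_g (j n : ℕ) (hj : 0 < j) :
    (coeff n) (X ^ j * g j) = if j ∣ n ∧ j ≤ n then (1 : ZMod 4) else 0 := by
  rw [g_eq j hj, coeff_X_pow_mul', ]
  by_cases hle : j ≤ n
  · rw [if_pos hle, coeff_mk]
    have : j ∣ n - j ↔ j ∣ n := by
      constructor
      · intro h
        have := Nat.dvd_add h (dvd_refl j)
        rwa [Nat.sub_add_cancel hle] at this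
      · intro h; exact Nat.dvd_sub h dvd_rfl
    simp [this, hle]
  · simp [hle]

/-- the unit factor `1 + 2 X^j/(1-X^j)` -/
noncomputable def u (j : ℕ) : P := 1 + 2 * (X ^ j * g j)

lemma sq_factor (j : ℕ) (hj : 0 < j) :
    ((1 : P) - X ^ j) ^ 2 = (1 - X ^ (2 * j)) * u j := by
  have hgj := hg j hj
  have hx : (X : P) ^ (2 * j) = (X ^ j) ^ 2 := by
    rw [← pow_mul, Nat.mul_comm]
  rw [hx, u]
  linear_combination (-2 * X ^ j * (1 + X ^ j)) * hgj + (- X ^ j) * h4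

lemma u_sq (j : ℕ) : u j * u j = 1 := by
  rw [u]
  linear_combination (X ^ j * g j + (X ^ j * g j) ^ 2) * h4

lemma prod_one_add_two (s : Finset ℕ) (t : ℕ → P) :
    ∏ i ∈ s, (1 + 2 * t i) = 1 + 2 * ∑ i ∈ s, t i := by
  induction s using Finset.cons_induction with
  | empty => simp
  | cons a s ha ih =>
    rw [Finset.prod_cons, ih, Finset.sum_cons]
    linear_combination (t a * ∑ i ∈ s, t i) * h4

lemma two_mul_nat_cast (a : ℕ) : (2 : ZMod 4) * (a : ZMod 4) = 2 * ((a % 2 : ℕ) : ZMod 4) := by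
  conv_lhs => rw [← Nat.mod_add_div a 2]
  push_cast
  have h4' : (4 : ZMod 4) = 0 := by decide
  linear_combination ((a / 2 : ℕ) : ZMod 4) * h4'

lemma two_mul_parity {a b : ℕ} (h : a % 2 = b % 2) :
    (2 : ZMod 4) * (a : ZMod 4) = 2 * (b : ZMod 4) := by
  rw [two_mul_nat_cast a, two_mul_nat_cast b, h]

lemma filter_dvd_Icc (n : ℕ) :
    Finset.filter (fun i => i ∣ n) (Finset.Icc 1 n) = n.divisors := by
  ext i
  simp only [Finset.mem_filter, Finset.mem_Icc, Nat.mem_divisors]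
  constructor
  · rintro ⟨⟨h1, h2⟩, hd⟩
    exact ⟨hd, by omega⟩
  · rintro ⟨hd, hn0⟩
    have hnp : 0 < n := Nat.pos_of_ne_zero hn0
    exact ⟨⟨Nat.pos_of_dvd_of_pos hd hnp, Nat.le_of_dvd hnp hd⟩, hd⟩

/-- the main coefficient formula for `bt` mod 4 -/
lemma bt_mod (n : ℕ) :
    ((bt n : ℤ) : ZMod 4) =
      (if n = 0 then 1 else 0) + 2 * ((n.divisors.card : ℕ) : ZMod 4) +
        2 * (if 2 ∣ n then (((n / 2).divisors.card : ℕ) : ZMod 4) else 0) := by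
  classical
  -- the reduction map
  set π : PowerSeries ℤ →+* P := PowerSeries.map (Int.castRingHom (ZMod 4)) with hπ
  have hπX : π X = X := PowerSeries.map_X _
  -- images of truncated products
  have hmap : ∀ k : ℕ, π (fTrunc k n) = ∏ i ∈ Icc 1 n, ((1 : P) - X ^ (k * i)) := by
    intro k
    rw [fTrunc, map_prod]
    refine Finset.prod_congr rfl fun i _ => ?_
    rw [map_sub, map_one, map_pow, hπX]
  set A1 : P := ∏ i ∈ Icc 1 n, ((1 : P) - X ^ (1 * i)) with hA1
  set A2 : P := ∏ i ∈ Icc 1 n, ((1 : P) - X ^ (2 * i)) with hA2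
  set A4 : P := ∏ i ∈ Icc 1 n, ((1 : P) - X ^ (4 * i)) with hA4
  set U1 : P := ∏ i ∈ Icc 1 n, u i with hU1
  set U2 : P := ∏ i ∈ Icc 1 n, u (2 * i) with hU2
  set B : P := π (PowerSeries.invOfUnit ((fTrunc 1 n) ^ 6 * (fTrunc 2 n) ^ 3) 1) with hB
  -- the inverse property
  have hconst : constantCoeff (R := ℤ) ((fTrunc 1 n) ^ 6 * (fTrunc 2 n) ^ 3) = 1 := by
    rw [map_mul, map_pow, map_pow]
    have : ∀ k : ℕ, 0 < k → constantCoeff (R := ℤ) (fTrunc k n) = 1 := by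
      intro k hk
      rw [fTrunc, map_prod]
      refine Finset.prod_eq_one fun i hi => ?_
      have hi1 : 1 ≤ i := (Finset.mem_Icc.mp hi).1
      have : k * i ≠ 0 := by positivity
      simp [this]
    rw [this 1 one_pos, this 2 two_pos]; norm_num
  have hinv : A1 ^ 6 * A2 ^ 3 * B = 1 := by
    have := PowerSeries.mul_invOfUnit ((fTrunc 1 n) ^ 6 * (fTrunc 2 n) ^ 3) 1 (by simpa using hconst)
    have h := congrArg π this
    rw [map_mul, map_one, map_mul, map_pow, map_pow, hmap 1, hmap 2] at h
    rw [hA1, hA2, hB]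
    exact h
  -- product identities
  have hA1sq : A1 ^ 2 = A2 * U1 := by
    rw [hA1, hA2, hU1, ← Finset.prod_pow, ← Finset.prod_mul_distrib]
    refine Finset.prod_congr rfl fun i hi => ?_
    have hi1 : 0 < i := (Finset.mem_Icc.mp hi).1
    have := sq_factor i hi1
    rw [one_mul]
    simpa using this
  have hA2sq : A2 ^ 2 = A4 * U2 := by
    rw [hA2, hA4, hU2, ← Finset.prod_pow, ← Finset.prod_mul_distrib]
    refine Finset.prod_congr rfl fun i hi => ?_
    have hi1 : 0 < i := (Finset.mem_Icc.mp hi).1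
    have h2i : 0 < 2 * i := by positivity
    have := sq_factor (2 * i) h2i
    have he : 2 * (2 * i) = 4 * i := by ring
    rwa [he] at this
  have hU1sq : U1 ^ 2 = 1 := by
    rw [hU1, ← Finset.prod_pow]
    refine Finset.prod_eq_one fun i _ => ?_
    rw [sq]; exact u_sq i
  have hU2sq : U2 ^ 2 = 1 := by
    rw [hU2, ← Finset.prod_pow]
    refine Finset.prod_eq_one fun i _ => ?_
    rw [sq]; exact u_sq _
  have e1 : A1 ^ 6 = A2 ^ 3 * U1 ^ 3 := by
    rw [show (6 : ℕ) = 2 * 3 from rfl, pow_mul, hA1sq, mul_pow]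
  have e2 : A2 ^ 6 = A4 ^ 3 * U2 ^ 3 := by
    rw [show (6 : ℕ) = 2 * 3 from rfl, pow_mul, hA2sq, mul_pow]
  have h6 : A1 ^ 6 * A2 ^ 3 = A4 ^ 3 * (U1 ^ 3 * U2 ^ 3) := by
    linear_combination A2 ^ 3 * e1 + U1 ^ 3 * e2
  have hU1_4 : U1 ^ 4 = 1 := by
    calc U1 ^ 4 = (U1 ^ 2) ^ 2 := by ring
      _ = 1 := by rw [hU1sq, one_pow]
  have hU2_4 : U2 ^ 4 = 1 := by
    calc U2 ^ 4 = (U2 ^ 2) ^ 2 := by ring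
      _ = 1 := by rw [hU2sq, one_pow]
  have hmain : A4 ^ 3 * B = U1 * U2 := by
    rw [h6] at hinv
    calc A4 ^ 3 * B = A4 ^ 3 * B * (U1 ^ 4 * U2 ^ 4) := by rw [hU1_4, hU2_4]; ring
      _ = (A4 ^ 3 * (U1 ^ 3 * U2 ^ 3) * B) * (U1 * U2) := by ring
      _ = 1 * (U1 * U2) := by rw [hinv]
      _ = U1 * U2 := one_mul _
  -- expand the product of units
  have hU1e : U1 = 1 + 2 * ∑ i ∈ Icc 1 n, X ^ i * g i := by
    rw [hU1]
    exact prod_one_add_two _ _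
  have hU2e : U2 = 1 + 2 * ∑ i ∈ Icc 1 n, X ^ (2 * i) * g (2 * i) := by
    rw [hU2]
    exact prod_one_add_two _ _
  set S1 : P := ∑ i ∈ Icc 1 n, X ^ i * g i with hS1
  set S2 : P := ∑ i ∈ Icc 1 n, X ^ (2 * i) * g (2 * i) with hS2
  have hprod : U1 * U2 = 1 + 2 * S1 + 2 * S2 := by
    rw [hU1e, hU2e]
    linear_combination (S1 * S2) * h4
  -- coefficient of bt
  have hkey : ∀ Φ : PowerSeries ℤ, (((PowerSeries.coeff (R := ℤ) n) Φ : ℤ) : ZMod 4) = (coeff n) (π Φ) := by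
    intro Φ
    rw [hπ, PowerSeries.coeff_map]
    rfl
  have hbt : ((bt n : ℤ) : ZMod 4) = (coeff n) (U1 * U2) := by
    rw [← hmain, bt, hkey]
    congr 1
    rw [map_mul, map_pow, hmap 4, ← hA4, ← hB]
  rw [hbt, hprod]
  -- now compute coefficients
  have hone : (coeff n) (1 : P) = if n = 0 then 1 else 0 := by
    simp [PowerSeries.coeff_one]
  have hcS1 : (coeff n) S1 = ((n.divisors.card : ℕ) : ZMod 4) := by
    rw [hS1, map_sum]
    have : ∀ i ∈ Icc 1 n, (coeff n) (X ^ i * g i)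
        = if i ∣ n then (1 : ZMod 4) else 0 := by
      intro i hi
      obtain ⟨hi1, hin⟩ := Finset.mem_Icc.mp hi
      rw [coeff_X_g i n hi1]
      simp [hin]
    rw [Finset.sum_congr rfl this, Finset.sum_boole, filter_dvd_Icc]
  have hcS2 : (coeff n) S2
      = if 2 ∣ n then (((n / 2).divisors.card : ℕ) : ZMod 4) else 0 := by
    rw [hS2, map_sum]
    have hterm : ∀ i ∈ Icc 1 n, (coeff n) (X ^ (2 * i) * g (2 * i))
        = if 2 * i ∣ n then (1 : ZMod 4) else 0 := by
      intro i hi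
      obtain ⟨hi1, hin⟩ := Finset.mem_Icc.mp hi
      have h2i : 0 < 2 * i := by positivity
      rw [coeff_X_g (2 * i) n h2i]
      have hn : 0 < n := lt_of_lt_of_le hi1 hin
      by_cases hd : 2 * i ∣ n
      · have : 2 * i ≤ n := Nat.le_of_dvd hn hd
        simp [hd, this]
      · simp [hd]
    rw [Finset.sum_congr rfl hterm, Finset.sum_boole]
    by_cases h2n : 2 ∣ n
    · rw [if_pos h2n]
      congr 1
      rcases Nat.eq_zero_or_pos n with hn0 | hn0
      · subst hn0; simp
      obtain ⟨m, hm⟩ := h2n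
      have hmpos : 0 < m := by omega
      have : n / 2 = m := by omega
      rw [this]
      congr 1
      ext i
      simp only [Finset.mem_filter, Finset.mem_Icc, Nat.mem_divisors]
      constructor
      · rintro ⟨⟨h1, h2⟩, hd⟩
        refine ⟨?_, hmpos.ne'⟩
        rw [hm] at hd
        exact (Nat.mul_dvd_mul_iff_left (show 0 < 2 by norm_num)).mp hd
      · rintro ⟨hd, _⟩
        have hile : i ≤ m := Nat.le_of_dvd hmpos hd
        have hi1 : 0 < i := Nat.pos_of_dvd_of_pos hd hmpos
        refine ⟨⟨hi1, by omega⟩, ?_⟩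
        rw [hm]
        exact Nat.mul_dvd_mul_left 2 hd
    · rw [if_neg h2n]
      have : Finset.filter (fun i => 2 * i ∣ n) (Icc 1 n) = ∅ := by
        refine Finset.filter_eq_empty_iff.mpr fun i _ hd => h2n (dvd_trans ⟨i, rfl⟩ hd)
      rw [this]
      simp
  rw [map_add, map_add, hone]
  have h2S : ∀ T : P, (coeff n) (2 * T) = 2 * (coeff n) T := by
    intro T
    rw [two_mul, map_add, two_mul]
  rw [h2S, h2S, hcS1, hcS2]

/-- parity of divisor counts fact -/
lemma divisors_parity (n : ℕ) (hn : 0 < n) :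
    ((2 * n).divisors.card) % 2 = (if 2 ∣ n then ((n / 2).divisors.card) else 0) % 2 := by
  obtain ⟨e, o, hodd, rfl⟩ : ∃ e o, ¬ 2 ∣ o ∧ n = 2 ^ e * o :=
    ⟨_, _, Nat.not_dvd_ordCompl Nat.prime_two hn.ne',
      (Nat.ordProj_mul_ordCompl_eq_self n 2).symm⟩
  have hopos : 0 < o := Nat.pos_of_ne_zero (fun h => by simp [h] at hn)
  have hcop : ∀ k : ℕ, Nat.Coprime (2 ^ k) o :=
    fun k => Nat.Coprime.pow_left k
      (Nat.coprime_two_left.mpr (Nat.odd_iff.mpr (Nat.two_dvd_ne_zero.mp hodd)))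
  have hcard : ∀ k : ℕ, ((2 ^ k * o).divisors.card) = (k + 1) * o.divisors.card := by
    intro k
    rw [(hcop k).card_divisors_mul]
    congr 1
    rw [Nat.divisors_prime_pow Nat.prime_two, Finset.card_map, Finset.card_range]
  cases e with
  | zero =>
    have hnodd : ¬ 2 ∣ 2 ^ 0 * o := by simpa using hodd
    rw [if_neg hnodd, show 2 * (2 ^ 0 * o) = 2 ^ 1 * o by ring, hcard]
    omega
  | succ e' =>
    have h2dvd : 2 ∣ 2 ^ (e' + 1) * o :=
      Dvd.dvd.mul_right (dvd_pow_self 2 (Nat.succ_ne_zero e')) o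
    have hdiv : (2 ^ (e' + 1) * o) / 2 = 2 ^ e' * o := by
      rw [pow_succ, show 2 ^ e' * 2 * o = 2 * (2 ^ e' * o) by ring]
      exact Nat.mul_div_cancel_left _ two_pos
    rw [if_pos h2dvd, show 2 * (2 ^ (e' + 1) * o) = 2 ^ (e' + 2) * o by ring, hdiv,
      hcard, hcard]
    have hexp : (e' + 2 + 1) * o.divisors.card
        = (e' + 1) * o.divisors.card + 2 * o.divisors.card := by ring
    omega

end OCPT

theorem stmt11 (n : ℕ) : bt (2 * n) ≡ bt n [ZMOD 4] := by
  have key : ((bt (2 * n) : ℤ) : ZMod 4) = ((bt n : ℤ) : ZMod 4) := by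
    rw [OCPT.bt_mod, OCPT.bt_mod]
    rcases Nat.eq_zero_or_pos n with hn0 | hn
    · subst hn0; norm_num
    · have h1 : ¬ (2 * n = 0) := by positivity
      have h2 : ¬ (n = 0) := hn.ne'
      rw [if_neg h1, if_neg h2]
      have hd2 : 2 ∣ 2 * n := ⟨n, rfl⟩
      rw [if_pos hd2, Nat.mul_div_cancel_left n two_pos]
      have hpar := OCPT.divisors_parity n hn
      have := OCPT.two_mul_parity hpar
      by_cases h2n : 2 ∣ n
      · rw [if_pos h2n] at this ⊢
        linear_combination this
      · rw [if_neg h2n] at this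
        rw [if_neg h2n]
        push_cast at this ⊢
        linear_combination this
  exact_mod_cast (ZMod.intCast_eq_intCast_iff' _ _ 4).mp key
end

section
/- For all integers n ≥ 0 and k ≥ 0, b_{2k+1}(8n+7) ≡ 0 (mod 16), where b_m denotes the overcubic partition m-tuples function. -/
open PowerSeries

open Finset

section Approx
variable {R : Type*} [CommRing R]

/-- Two power series agree in all degrees `≤ N`. -/
def approx (N : ℕ) (E F : PowerSeries R) : Prop := ∀ i ≤ N, coeff i E = coeff i F

theorem approx.refl (N : ℕ) (E : PowerSeries R) : approx N E E := fun _ _ => rfl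

theorem approx.symm {N : ℕ} {E F : PowerSeries R} (h : approx N E F) : approx N F E :=
  fun i hi => (h i hi).symm

theorem approx.trans {N : ℕ} {E F G : PowerSeries R} (h : approx N E F) (h' : approx N F G) :
    approx N E G := fun i hi => (h i hi).trans (h' i hi)

theorem approx.mul {N : ℕ} {E F G H : PowerSeries R} (h : approx N E F) (h' : approx N G H) :
    approx N (E * G) (F * H) := by
  intro i hi
  rw [coeff_mul, coeff_mul]
  refine Finset.sum_congr rfl fun p hp => ?_
  rw [Finset.HasAntidiagonal.mem_antidiagonal] at hp
  rw [h p.1 (by omega), h' p.2 (by omega)]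

theorem approx.pow {N : ℕ} {E F : PowerSeries R} (h : approx N E F) (m : ℕ) :
    approx N (E ^ m) (F ^ m) := by
  induction m with
  | zero => simpa using approx.refl N 1
  | succ m ih => rw [pow_succ, pow_succ]; exact ih.mul h

theorem approx.add {N : ℕ} {E F G H : PowerSeries R} (h : approx N E F) (h' : approx N G H) :
    approx N (E + G) (F + H) := by
  intro i hi; simp [map_add, h i hi, h' i hi]

theorem approx.sum {N : ℕ} {ι : Type*} {s : Finset ι} {f g : ι → PowerSeries R}
    (h : ∀ l ∈ s, approx N (f l) (g l)) : approx N (∑ l ∈ s, f l) (∑ l ∈ s, g l) := by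
  intro i hi
  rw [map_sum, map_sum]
  exact Finset.sum_congr rfl fun l hl => h l hl i hi

theorem approx_X_pow_mul {N a : ℕ} {A B : PowerSeries R} (h : a > N ∨ approx N A B) :
    approx N (X ^ a * A) (X ^ a * B) := by
  intro i hi
  rw [coeff_X_pow_mul', coeff_X_pow_mul']
  rcases h with h | h
  · rw [if_neg (by omega), if_neg (by omega)]
  · split
    · next h2 => exact h (i - a) (by omega)
    · rfl

theorem approx_one_sub_X_pow {N e : ℕ} (he : e > N) :
    approx N ((1 : PowerSeries R) - X ^ e) 1 := by
  intro i hi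
  rw [map_sub, coeff_X_pow, if_neg (by omega), sub_zero]

/-- Uniqueness of approximate inverses. -/
theorem approx_inv_unique {N : ℕ} {E G H : PowerSeries R}
    (hG : approx N (E * G) 1) (hH : approx N (E * H) 1) : approx N G H := by
  have c1 : approx N (G * 1) (G * (E * H)) := (approx.refl N G).mul hH.symm
  have c2 : G * (E * H) = H * (E * G) := by ring
  have c3 : approx N (H * (E * G)) (H * 1) := (approx.refl N H).mul hG
  intro i hi
  calc coeff i G = coeff i (G * 1) := by rw [mul_one]
    _ = coeff i (G * (E * H)) := c1 i hi
    _ = coeff i (H * (E * G)) := by rw [c2]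
    _ = coeff i (H * 1) := c3 i hi
    _ = coeff i H := by rw [mul_one]

theorem approx.map {N : ℕ} {S : Type*} [CommRing S] (f : R →+* S) {E F : PowerSeries R}
    (h : approx N E F) : approx N (PowerSeries.map f E) (PowerSeries.map f F) := by
  intro i hi
  rw [coeff_map, coeff_map, h i hi]

end Approx

section Gp
variable (R : Type*) [CommRing R]

/-- Gaussian binomial `[N choose l]` in the variable `X^(2c)`, as a power series. -/
noncomputable def Gp (c : ℕ) : ℕ → ℕ → PowerSeries R
  | 0, 0 => 1
  | 0, _+1 => 0
  | N+1, 0 => 1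
  | N+1, l+1 => Gp c N (l+1) + X ^ (2*c*(N-l)) * Gp c N l

variable {R}
variable {c : ℕ}

@[simp] theorem Gp_zero_right (N : ℕ) : Gp R c N 0 = 1 := by cases N <;> rfl

theorem Gp_succ_succ (N l : ℕ) :
    Gp R c (N+1) (l+1) = Gp R c N (l+1) + X ^ (2*c*(N-l)) * Gp R c N l := rfl

theorem Gp_eq_zero {N l : ℕ} (h : N < l) : Gp R c N l = 0 := by
  induction N generalizing l with
  | zero => match l, h with | l+1, _ => rfl
  | succ N ih =>
    match l, h with
    | l+1, h =>
      rw [Gp_succ_succ, ih (by omega), ih (by omega), mul_zero, add_zero]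

@[simp] theorem Gp_self (N : ℕ) : Gp R c N N = 1 := by
  induction N with
  | zero => rfl
  | succ N ih => rw [Gp_succ_succ, Gp_eq_zero (by omega), ih, zero_add, Nat.sub_self,
      mul_zero, pow_zero, one_mul]

/-- The second Pascal recurrence. -/
theorem Gp_pascalB (N l : ℕ) :
    Gp R c (N+1) (l+1) = X ^ (2*c*(l+1)) * Gp R c N (l+1) + Gp R c N l := by
  induction N generalizing l with
  | zero =>
    cases l with
    | zero => simp [Gp_succ_succ, Gp_eq_zero]
    | succ l => simp [Gp_succ_succ, Gp_eq_zero, Nat.succ_lt_succ]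
  | succ N ih =>
    cases l with
    | zero =>
      have h1 := Gp_succ_succ (R := R) (c := c) (N+1) 0
      have h2 := ih 0
      have h4 := Gp_succ_succ (R := R) (c := c) N 0
      simp only [Gp_zero_right, mul_one, Nat.sub_zero] at h1 h2 h4 ⊢
      rw [show 2*c*(N+1) = 2*c*(0+1) + 2*c*N by ring] at h1
      linear_combination h1 + h2 - (X : PowerSeries R)^(2*c*(0+1)) * h4
    | succ l =>
      rcases lt_trichotomy l N with hl | hl | hl
      · -- main case l + 1 ≤ N
        obtain ⟨d, rfl⟩ : ∃ d, N = l+1+d := ⟨N-l-1, by omega⟩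
        have h1 := Gp_succ_succ (R := R) (c := c) (l+1+d+1) (l+1)
        have h2 := ih (l+1)
        have h3 := ih l
        have h4 := Gp_succ_succ (R := R) (c := c) (l+1+d) (l+1)
        have h5 := Gp_succ_succ (R := R) (c := c) (l+1+d) l
        rw [show l+1+d+1-(l+1) = d+1 by omega] at h1
        rw [show l+1+d-(l+1) = d by omega] at h4
        rw [show l+1+d-l = d+1 by omega] at h5
        linear_combination h1 + (X : PowerSeries R)^(2*c*(d+1)) * h3 + h2
          - (X : PowerSeries R)^(2*c*(l+1+1)) * h4 - h5
      · -- l = N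
        subst hl
        rw [Gp_self, Gp_self, Gp_eq_zero (by omega), mul_zero, zero_add]
      · -- l > N
        rw [Gp_eq_zero (by omega), Gp_eq_zero (by omega), Gp_eq_zero (by omega)]
        simp

/-- `∏_{i=a}^{b} (1 - X^(e i))`. -/
noncomputable def Pprod (e a b : ℕ) : PowerSeries R :=
  ∏ i ∈ Finset.Icc a b, (1 - (X : PowerSeries R) ^ (e * i))

theorem Pprod_empty {e a b : ℕ} (h : b < a) : (Pprod e a b : PowerSeries R) = 1 := by
  rw [Pprod, Finset.Icc_eq_empty (by omega), Finset.prod_empty]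

theorem Pprod_succ_top {e a b : ℕ} (h : a ≤ b + 1) :
    (Pprod e a (b+1) : PowerSeries R) = Pprod e a b * (1 - X ^ (e * (b+1))) :=
  Finset.prod_Icc_succ_top h _

theorem Pprod_succ_bot {e a b : ℕ} (h : a ≤ b) :
    (Pprod e a b : PowerSeries R) = (1 - X ^ (e * a)) * Pprod e (a+1) b := by
  rw [Pprod, Pprod, show Finset.Icc a b = insert a (Finset.Icc (a+1) b) from by
    ext x; simp [Finset.mem_Icc]; omega, Finset.prod_insert (by simp)]

theorem Pprod_split {e a b b' : ℕ} (h : a ≤ b + 1) (h' : b ≤ b') :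
    (Pprod e a b' : PowerSeries R) = Pprod e a b * Pprod e (b+1) b' := by
  rw [Pprod, Pprod, Pprod, ← Finset.prod_union (by
    simp [Finset.disjoint_left, Finset.mem_Icc]; omega)]
  congr 1
  ext x; simp [Finset.mem_Icc]; omega

/-- The q-binomial quotient identity. -/
theorem Gp_mul_Pprod {N l : ℕ} (h : l ≤ N) :
    (Gp R c N l : PowerSeries R) * Pprod (2*c) 1 l = Pprod (2*c) (N+1-l) N := by
  induction N generalizing l with
  | zero =>
    match l, h with
    | 0, _ => simp [Pprod_empty]
  | succ N ih =>
    match l, h with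
    | 0, _ => simp [Pprod_empty]
    | l+1, h =>
      rcases Nat.lt_or_ge l N with hl | hl
      · -- l + 1 ≤ N
        obtain ⟨d, rfl⟩ : ∃ d, N = l+1+d := ⟨N-l-1, by omega⟩
        have h2 := ih (l := l+1) (by omega)
        have h3 := ih (l := l) (by omega)
        rw [show l+1+d+1-(l+1) = d+1 by omega] at h2
        rw [show l+1+d+1-l = d+2 by omega] at h3
        have ht : (Pprod (2*c) 1 (l+1) : PowerSeries R)
            = Pprod (2*c) 1 l * (1 - X^(2*c*(l+1))) := Pprod_succ_top (by omega)
        have hb : (Pprod (2*c) (d+1) (l+1+d) : PowerSeries R)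
            = (1 - X^(2*c*(d+1))) * Pprod (2*c) (d+2) (l+1+d) := Pprod_succ_bot (by omega)
        rw [Gp_succ_succ, show l+1+d-l = d+1 by omega, show l+1+d+1+1-(l+1) = d+2 by omega,
          Pprod_succ_top (show d+2 ≤ l+1+d+1 by omega)]
        linear_combination h2 + hb
          + (X:PowerSeries R)^(2*c*(d+1)) * Gp R c (l+1+d) l * ht
          + (X:PowerSeries R)^(2*c*(d+1)) * (1 - (X:PowerSeries R)^(2*c*(l+1))) * h3
      · -- l = N
        have hl' : l = N := by omega
        subst hl'
        rw [Gp_self, one_mul, show l+1+1-(l+1) = 1 by omega]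

theorem Pprod_approx_one {D e a b : ℕ} (h : e * a > D) :
    approx D (Pprod e a b : PowerSeries R) 1 := by
  induction b with
  | zero =>
    rcases Nat.eq_zero_or_pos a with rfl | ha
    · omega
    · rw [Pprod_empty ha]; exact approx.refl D 1
  | succ b ih =>
    rcases Nat.lt_or_ge (b+1) a with hb | hb
    · rw [Pprod_empty hb]; exact approx.refl D 1
    · rw [Pprod_succ_top hb]
      have h1 : approx D ((1 : PowerSeries R) - X ^ (e*(b+1))) 1 :=
        approx_one_sub_X_pow (lt_of_lt_of_le h (Nat.mul_le_mul_left e hb))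
      simpa using ih.mul h1

end Gp

section L3
variable {R : Type*} [CommRing R] {c : ℕ}

def eI (l n : ℕ) : ℕ := ((l : ℤ) - n).natAbs ^ 2

theorem eI_cast (l n : ℕ) : (eI l n : ℤ) = ((l : ℤ) - n)^2 := by
  rw [eI]; push_cast; rw [sq_abs]

theorem eI_succ_succ (l n : ℕ) : eI (l+1) (n+1) = eI l n := by
  unfold eI; congr 1; omega

theorem lemA (c l n m : ℕ) (h : l ≤ m + n) :
    c * eI (l+1) n + 2*c*((m+n)-l) = c * eI l n + c*(2*m+1) := by
  have : (c : ℤ) * eI (l+1) n + 2*c*((m+n : ℕ)-(l:ℕ) : ℕ) = c * eI l n + c*(2*m+1) := by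
    rw [eI_cast, eI_cast]
    have : (((m+n : ℕ) - l : ℕ) : ℤ) = (m : ℤ) + n - l := by omega
    rw [this]; push_cast; ring
  exact_mod_cast this

theorem lemB (c l n : ℕ) :
    c * eI l (n+1) + 2*c*l = c * eI l n + c*(2*n+1) := by
  have : (c : ℤ) * eI l (n+1) + 2*c*l = c * eI l n + c*(2*n+1) := by
    rw [eI_cast, eI_cast]; push_cast; ring
  exact_mod_cast this

theorem GpA' (N l : ℕ) : Gp R c (N+1) l
    = Gp R c N l + (if l = 0 then 0 else X^(2*c*(N+1-l)) * Gp R c N (l-1)) := by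
  cases l with
  | zero => simp
  | succ l => rw [Gp_succ_succ]; simp [Nat.succ_sub_succ]

theorem GpB' (N l : ℕ) : Gp R c (N+1) l
    = X^(2*c*l) * Gp R c N l + (if l = 0 then 0 else Gp R c N (l-1)) := by
  cases l with
  | zero => simp
  | succ l => rw [Gp_pascalB]; simp

/-- Finite Jacobi triple product identity. -/
theorem jtp (c : ℕ) (z : R) (m n : ℕ) :
    (∏ j ∈ Icc 1 m, (1 + C z * X ^ (c*(2*j-1)))) *
      (∏ j ∈ Icc 1 n, (C z + X ^ (c*(2*j-1))))
    = ∑ l ∈ range (m+n+1), X ^ (c * eI l n) * (C z)^l * Gp R c (m+n) l := by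
  induction n with
  | zero =>
    induction m with
    | zero => simp [eI]
    | succ m ihm =>
      have key : ∑ l ∈ range (m+1+0+1), X ^ (c * eI l 0) * (C z)^l * Gp R c (m+1+0) l
          = (1 + C z * X ^ (c*(2*m+1))) *
            ∑ l ∈ range (m+0+1), X ^ (c * eI l 0) * (C z)^l * Gp R c (m+0) l := by
        have step : ∀ l ∈ range (m+2),
            X ^ (c * eI l 0) * (C z)^l * Gp R c (m+1) l
            = X ^ (c * eI l 0) * (C z)^l * Gp R c m l
              + (if l = 0 then 0 else
                  X ^ (c * eI l 0 + 2*c*(m+1-l)) * (C z)^l * Gp R c m (l-1)) := by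
          intro l _
          rw [GpA' m l, mul_add]
          congr 1
          split
          · simp
          · rw [pow_add]; ring
        rw [show m+1+0 = m+1 from rfl, Finset.sum_congr rfl step, Finset.sum_add_distrib]
        rw [Finset.sum_range_succ _ (m+1), Gp_eq_zero (by omega), mul_zero, add_zero]
        rw [Finset.sum_range_succ' (fun l => if l = 0 then 0 else
          X ^ (c * eI l 0 + 2*c*(m+1-l)) * (C z)^l * Gp R c m (l-1))]
        simp only [if_neg (Nat.succ_ne_zero _), if_pos rfl, if_true, add_zero, Nat.add_sub_cancel]
        have step2 : ∀ l ∈ range (m+1),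
            X ^ (c * eI (l+1) 0 + 2*c*(m+1-(l+1))) * (C z)^(l+1) * Gp R c m l
            = (C z * X ^ (c*(2*m+1))) *
              (X ^ (c * eI l 0) * (C z)^l * Gp R c m l) := by
          intro l hl
          rw [mem_range] at hl
          rw [show m+1-(l+1) = m - l from by omega, show c * eI (l+1) 0 + 2*c*(m-l)
            = c * eI l 0 + c*(2*m+1) from by simpa using lemA c l 0 m (by omega),
            pow_add, pow_succ]
          ring
        rw [Finset.sum_congr rfl step2, ← Finset.mul_sum]
        ring
      rw [key, ← ihm]
      rw [Finset.prod_Icc_succ_top (by omega : 1 ≤ m+1), show 2*(m+1)-1 = 2*m+1 from by omega]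
      ring
  | succ n ihn =>
    have key : ∑ l ∈ range (m+(n+1)+1), X ^ (c * eI l (n+1)) * (C z)^l * Gp R c (m+(n+1)) l
        = (C z + X ^ (c*(2*n+1))) *
          ∑ l ∈ range (m+n+1), X ^ (c * eI l n) * (C z)^l * Gp R c (m+n) l := by
      have step : ∀ l ∈ range (m+n+2),
          X ^ (c * eI l (n+1)) * (C z)^l * Gp R c (m+n+1) l
          = X ^ (c * eI l (n+1) + 2*c*l) * (C z)^l * Gp R c (m+n) l
            + (if l = 0 then 0 else
                X ^ (c * eI l (n+1)) * (C z)^l * Gp R c (m+n) (l-1)) := by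
        intro l _
        rw [GpB' (m+n) l, mul_add, pow_add]
        congr 1
        · ring
        · split
          · simp
          · rfl
      simp only [show m+(n+1) = m+n+1 from by omega]
      rw [show m+n+1+1 = m+n+2 from rfl,
        Finset.sum_congr rfl step, Finset.sum_add_distrib]
      rw [Finset.sum_range_succ (fun l => X ^ (c * eI l (n+1) + 2*c*l) * (C z)^l * Gp R c (m+n) l) (m+n+1),
        Gp_eq_zero (by omega), mul_zero, add_zero]
      rw [Finset.sum_range_succ' (fun l => if l = 0 then 0 else
        X ^ (c * eI l (n+1)) * (C z)^l * Gp R c (m+n) (l-1))]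
      simp only [if_neg (Nat.succ_ne_zero _), if_pos rfl, if_true, add_zero, Nat.add_sub_cancel]
      have s1 : ∀ l ∈ range (m+n+1),
          X ^ (c * eI l (n+1) + 2*c*l) * (C z)^l * Gp R c (m+n) l
          = X ^ (c*(2*n+1)) * (X ^ (c * eI l n) * (C z)^l * Gp R c (m+n) l) := by
        intro l _
        rw [lemB c l n, pow_add]; ring
      have s2 : ∀ l ∈ range (m+n+1),
          X ^ (c * eI (l+1) (n+1)) * (C z)^(l+1) * Gp R c (m+n) l
          = C z * (X ^ (c * eI l n) * (C z)^l * Gp R c (m+n) l) := by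
        intro l _
        rw [eI_succ_succ, pow_succ]; ring
      rw [Finset.sum_congr rfl s1, Finset.sum_congr rfl s2, ← Finset.mul_sum, ← Finset.mul_sum]
      ring
    rw [key, ← ihn, Finset.prod_Icc_succ_top (by omega : 1 ≤ n+1),
      show 2*(n+1)-1 = 2*n+1 from by omega]
    ring
end L3

section L4
variable {R : Type*} [CommRing R]

/-- `uc c m = (-1)^s` if `m = c s^2` with `s ≥ 1`, and `0` otherwise. -/
def uc (c m : ℕ) : ℤ :=
  if c * (Nat.sqrt (m / c))^2 = m ∧ m ≠ 0 then (-1)^(Nat.sqrt (m / c)) else 0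

theorem uc_zero (c : ℕ) : uc c 0 = 0 := by simp [uc]

theorem uc_csq {c s : ℕ} (hc : 1 ≤ c) (hs : 1 ≤ s) : uc c (c * s^2) = (-1)^s := by
  have h1 : c * s^2 / c = s^2 := Nat.mul_div_cancel_left _ (by omega)
  have h2 : Nat.sqrt (s^2) = s := Nat.sqrt_eq' s
  rw [uc, h1, h2, if_pos ⟨rfl, by positivity⟩]

theorem uc_eq_zero {c m : ℕ} (h : ∀ s, m ≠ c * s^2) : uc c m = 0 := by
  rw [uc, if_neg]
  rintro ⟨h1, -⟩
  exact h _ h1.symm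

/-- The theta series `1 + 2 ∑_{s≥1} (-1)^s q^{c s²} = ∏ (1-q^{ci})² / ∏(1-q^{2ci})`. -/
noncomputable def thetaR (R : Type*) [CommRing R] (c : ℕ) : PowerSeries R :=
  1 + C (2:R) * PowerSeries.mk (fun m => ((uc c m : ℤ) : R))

theorem coeff_thetaR (c i : ℕ) :
    coeff i (thetaR R c) = (if i = 0 then 1 else 0) + 2 * ((uc c i : ℤ) : R) := by
  rw [thetaR, map_add, coeff_one]
  congr 1
  rw [coeff_C_mul, coeff_mk]

theorem negOnePow_congr {a b : ℕ} (h : a % 2 = b % 2) : (-1 : R)^a = (-1)^b := by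
  rcases Nat.even_or_odd a with ha | ha
  · have hb : Even b := Nat.even_iff.mpr (by have := Nat.even_iff.mp ha; omega)
    rw [ha.neg_one_pow, hb.neg_one_pow]
  · have hb : Odd b := Nat.odd_iff.mpr (by have := Nat.odd_iff.mp ha; omega)
    rw [ha.neg_one_pow, hb.neg_one_pow]

theorem eI_eq_left {l D : ℕ} (h : l ≤ D) : eI l D = (D - l)^2 := by
  unfold eI; congr 1; omega

theorem eI_eq_right {l D : ℕ} (h : D ≤ l) : eI l D = (l - D)^2 := by
  unfold eI; congr 1; omega

theorem two_mul_le_sq_succ (t : ℕ) : 2*t ≤ t^2 + 1 := by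
  cases t with
  | zero => simp
  | succ u => nlinarith [sq_nonneg u]

/-- z = -1 specialization of the JTP, with m = n = N. -/
theorem oddprod_sq (c N : ℕ) :
    (∏ j ∈ Icc 1 N, (1 - (X : PowerSeries R)^(c*(2*j-1))))^2
    = ∑ l ∈ range (2*N+1), (-1 : PowerSeries R)^(l+N) * X^(c*eI l N) * Gp R c (2*N) l := by
  have h := jtp c (-1 : R) N N
  simp only [map_neg, map_one] at h
  have e1 : ∀ j ∈ Icc 1 N, (1 + (-1 : PowerSeries R) * X ^ (c*(2*j-1)))
      = 1 - X ^ (c*(2*j-1)) := by intro j _; ring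
  have e2 : ∀ j ∈ Icc 1 N, ((-1 : PowerSeries R) + X ^ (c*(2*j-1)))
      = (-1) * (1 - X ^ (c*(2*j-1))) := by intro j _; ring
  rw [Finset.prod_congr rfl e1, Finset.prod_congr rfl e2, Finset.prod_mul_distrib,
    Finset.prod_const, Nat.card_Icc, Nat.add_sub_cancel] at h
  have key : ((-1 : PowerSeries R)^N) * ((-1 : PowerSeries R)^N) = 1 := by
    rw [← pow_add]; exact Even.neg_one_pow ⟨N, rfl⟩
  have h2 : (∏ j ∈ Icc 1 N, (1 - (X : PowerSeries R)^(c*(2*j-1))))^2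
      = (-1 : PowerSeries R)^N * ((∏ j ∈ Icc 1 N, (1 - (X : PowerSeries R)^(c*(2*j-1)))) *
          ((-1 : PowerSeries R)^N * (∏ j ∈ Icc 1 N, (1 - (X : PowerSeries R)^(c*(2*j-1)))))) := by
    linear_combination (-((∏ j ∈ Icc 1 N, (1 - (X : PowerSeries R)^(c*(2*j-1))))^2)) * key
  rw [h2, h, Finset.mul_sum, show N + N = 2*N from by ring]
  refine Finset.sum_congr rfl fun l _ => ?_
  rw [pow_add]; ring

/-- Odd-even split of the product. -/
theorem odd_even_split (c N : ℕ) :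
    (Pprod c 1 (2*N) : PowerSeries R)
    = (∏ j ∈ Icc 1 N, (1 - (X : PowerSeries R)^(c*(2*j-1)))) * Pprod (2*c) 1 N := by
  induction N with
  | zero => simp [Pprod_empty]
  | succ N ih =>
    rw [show 2*(N+1) = (2*N+1)+1 from by ring, Pprod_succ_top (by omega),
      show 2*N+1 = (2*N)+1 from rfl, Pprod_succ_top (by omega),
      Finset.prod_Icc_succ_top (by omega : 1 ≤ N+1), Pprod_succ_top (by omega : 1 ≤ N+1), ih,
      show c*(2*(N+1)-1) = c*(2*N+1) from by rw [show 2*(N+1)-1 = 2*N+1 from by omega],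
      show (2*c)*(N+1) = c*(2*N+1+1) from by ring]
    ring

theorem gpB_approx {c D l : ℕ} (hc : 1 ≤ c) (hl : l ≤ 2*D) (ha : c * eI l D ≤ D) :
    approx D (Gp R c (2*D) l * Pprod (2*c) 1 D) 1 := by
  have key := Gp_mul_Pprod (R := R) (c := c) (N := 2*D) (l := l) hl
  rcases le_or_gt l D with hld | hld
  · -- l ≤ D
    set t := D - l with hts
    have he : eI l D = t^2 := eI_eq_left hld
    have ht2 : t^2 ≤ D := by
      calc t^2 ≤ c * t^2 := Nat.le_mul_of_pos_left _ (by omega)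
        _ ≤ D := by rw [← he]; exact ha
    have h2t := two_mul_le_sq_succ t
    have hsplit : (Pprod (2*c) 1 D : PowerSeries R)
        = Pprod (2*c) 1 l * Pprod (2*c) (l+1) D := Pprod_split (by omega) hld
    have hcalc : Gp R c (2*D) l * Pprod (2*c) 1 D
        = Pprod (2*c) (2*D+1-l) (2*D) * Pprod (2*c) (l+1) D := by
      rw [hsplit, ← mul_assoc, key]
    rw [hcalc, ← mul_one (1 : PowerSeries R)]
    refine approx.mul (Pprod_approx_one ?_) (Pprod_approx_one ?_)
    · calc D < 2*(D+1) := by omega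
        _ ≤ 2*c*(2*D+1-l) := by
            have : D + 1 ≤ 2*D+1-l := by omega
            calc 2*(D+1) ≤ 2*(2*D+1-l) := by omega
              _ ≤ 2*c*(2*D+1-l) := by
                  have := Nat.mul_le_mul_right (2*D+1-l) (show 2*1 ≤ 2*c by omega)
                  simpa [mul_assoc] using this
    · -- 2c(l+1) > D, using l = D - t, 2t ≤ t²+1 ≤ D+1
      have hl' : l = D - t := by omega
      have hgoal : D < 2*(l+1) := by
        obtain ⟨T, hT⟩ : ∃ T, T = t^2 := ⟨_, rfl⟩
        have h1 : T ≤ D := by rw [hT]; exact ht2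
        have h2 : 2*t ≤ T + 1 := by rw [hT]; exact h2t
        omega
      calc D < 2*(l+1) := hgoal
        _ ≤ 2*c*(l+1) := by
            have := Nat.mul_le_mul_right (l+1) (show 2*1 ≤ 2*c by omega)
            simpa [mul_assoc] using this
  · -- D < l
    set t := l - D with hts
    have he : eI l D = t^2 := eI_eq_right (by omega)
    have ht2 : t^2 ≤ D := by
      calc t^2 ≤ c * t^2 := Nat.le_mul_of_pos_left _ (by omega)
        _ ≤ D := by rw [← he]; exact ha
    have h2t := two_mul_le_sq_succ t
    have hsplit : (Pprod (2*c) 1 l : PowerSeries R)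
        = Pprod (2*c) 1 D * Pprod (2*c) (D+1) l := Pprod_split (by omega) (by omega)
    have q1 : approx D (Pprod (2*c) (D+1) l : PowerSeries R) 1 := by
      refine Pprod_approx_one ?_
      calc D < 2*(D+1) := by omega
        _ ≤ 2*c*(D+1) := by
            have := Nat.mul_le_mul_right (D+1) (show 2*1 ≤ 2*c by omega)
            simpa [mul_assoc] using this
    have q2 : approx D (Pprod (2*c) (2*D+1-l) (2*D) : PowerSeries R) 1 := by
      refine Pprod_approx_one ?_
      have h1 : 2*D+1-l = D+1-t := by omega
      have hgoal : D < 2*(D+1-t) := by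
        obtain ⟨T, hT⟩ : ∃ T, T = t^2 := ⟨_, rfl⟩
        have hT1 : T ≤ D := by rw [hT]; exact ht2
        have hT2 : 2*t ≤ T + 1 := by rw [hT]; exact h2t
        omega
      rw [h1]
      calc D < 2*(D+1-t) := hgoal
        _ ≤ 2*c*(D+1-t) := by
            have := Nat.mul_le_mul_right (D+1-t) (show 2*1 ≤ 2*c by omega)
            simpa [mul_assoc] using this
    have step1 : approx D (Gp R c (2*D) l * Pprod (2*c) 1 D)
        ((Gp R c (2*D) l * Pprod (2*c) 1 D) * Pprod (2*c) (D+1) l) := by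
      have := (approx.refl D (Gp R c (2*D) l * Pprod (2*c) 1 D)).mul q1.symm
      simpa using this
    have step2 : (Gp R c (2*D) l * Pprod (2*c) 1 D) * Pprod (2*c) (D+1) l
        = Pprod (2*c) (2*D+1-l) (2*D) := by
      rw [mul_assoc, ← hsplit, key]
    exact step1.trans (step2 ▸ q2)

theorem coeff_negOnePow_mul_X_pow (k a i : ℕ) :
    coeff i ((-1 : PowerSeries R)^k * X^a) = (-1 : R)^k * (if i = a then 1 else 0) := by
  have : ((-1 : PowerSeries R)^k) = C ((-1 : R)^k) := by
    rw [map_pow, map_neg, map_one]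
  rw [this, coeff_C_mul, coeff_X_pow]

/-- The finite theta sum approximates `thetaR`. -/
theorem theta_sum_approx {c D : ℕ} (hc : 1 ≤ c) :
    approx D (∑ l ∈ range (2*D+1), (-1 : PowerSeries R)^(l+D) * X^(c * eI l D))
      (thetaR R c) := by
  intro i hi
  rw [map_sum, coeff_thetaR]
  simp only [coeff_negOnePow_mul_X_pow]
  rcases Nat.eq_zero_or_pos i with rfl | hipos
  · -- i = 0
    rw [Finset.sum_eq_single D]
    · rw [eI_eq_left (le_refl D), Nat.sub_self, show (0:ℕ)^2 = 0 from by norm_num, Nat.mul_zero,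
        if_pos rfl, mul_one, uc_zero]
      have hD : (-1 : R)^(D+D) = 1 := Even.neg_one_pow ⟨D, rfl⟩
      rw [hD]
      push_cast
      ring
    · intro l hl hlD
      rw [if_neg, mul_zero]
      intro h0
      rcases Nat.mul_eq_zero.mp h0.symm with h | h
      · omega
      · have : l = D := by
          have h2 : ((l:ℤ) - D).natAbs = 0 := by
            have := pow_eq_zero_iff (n := 2) (by omega) |>.mp h
            exact this
          omega
        omega
    · intro h; exact absurd (by simp only [Finset.mem_range]; omega) h
  · -- i ≥ 1
    by_cases hs : c * (Nat.sqrt (i / c))^2 = i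
    · set s := Nat.sqrt (i / c) with hsdef
      have hs1 : 1 ≤ s := by
        rcases Nat.eq_zero_or_pos s with h0 | h
        · rw [h0] at hs; simp at hs; omega
        · exact h
      have hsD : s ≤ D := by
        have h1 : s ≤ s^2 := by nlinarith
        have h2 : s^2 ≤ c * s^2 := Nat.le_mul_of_pos_left _ (by omega)
        have h3 : c * s^2 ≤ D := by rw [hs]; exact hi
        exact le_trans h1 (le_trans h2 h3)
      have hpair : ({D - s, D + s} : Finset ℕ) ⊆ range (2*D+1) := by
        intro x hx
        simp only [Finset.mem_insert, Finset.mem_singleton] at hx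
        rcases hx with rfl | rfl <;> simp [Finset.mem_range] <;> omega
      rw [← Finset.sum_subset hpair]
      · have hne : D - s ≠ D + s := by omega
        rw [Finset.sum_insert (by simpa using hne), Finset.sum_singleton]
        rw [eI_eq_left (by omega), eI_eq_right (by omega),
          show D - (D - s) = s from by omega, show D + s - D = s from by omega,
          if_pos hs.symm, if_neg (by omega : ¬ i = 0)]
        have e1 : (-1 : R)^(D - s + D) = (-1)^s := negOnePow_congr (by omega)
        have e2 : (-1 : R)^(D + s + D) = (-1)^s := negOnePow_congr (by omega)
        rw [e1, e2, show i = c * s^2 from hs.symm, uc_csq hc hs1]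
        push_cast
        ring
      · intro l hl hlpair
        rw [if_neg, mul_zero]
        intro hieq
        -- c * eI l D = i forces |l - D| = s
        have ht : eI l D = ((l:ℤ) - D).natAbs^2 := rfl
        set t := ((l:ℤ) - D).natAbs with htdef
        have hit : i = c * t^2 := by rw [hieq, ht]
        have : Nat.sqrt (i / c) = t := by
          rw [hit, Nat.mul_div_cancel_left _ (by omega : 0 < c), Nat.sqrt_eq']
        have hts : t = s := by rw [← this]
        simp only [Finset.mem_insert, Finset.mem_singleton] at hlpair
        push_neg at hlpair
        omega
    · -- i is not of the form c s², all terms vanish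
      have huc : uc c i = 0 := by
        rw [uc, if_neg]; rintro ⟨h1, -⟩; exact hs h1
      rw [huc]
      rw [Finset.sum_eq_zero, if_neg (by omega)]
      · push_cast; ring
      · intro l hl
        rw [if_neg, mul_zero]
        intro hieq
        set t := ((l:ℤ) - D).natAbs with htdef
        have hit : i = c * t^2 := by rw [hieq]; rfl
        apply hs
        rw [hit, Nat.mul_div_cancel_left _ (by omega : 0 < c), Nat.sqrt_eq']

/-- Truncated Gauss identity: `(∏(1-q^{ci}))² ≈ ∏(1-q^{2ci}) · θ_c` in degrees `≤ D`. -/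
theorem gauss (R : Type*) [CommRing R] {c : ℕ} (hc : 1 ≤ c) (D : ℕ) :
    approx D ((Pprod c 1 D : PowerSeries R)^2) (Pprod (2*c) 1 D * thetaR R c) := by
  -- first pass to truncation level 2D
  have h1 : approx D (Pprod c 1 D : PowerSeries R) (Pprod c 1 (2*D)) := by
    rcases Nat.eq_zero_or_pos D with rfl | hD
    · intro i hi; interval_cases i; rfl
    · have hsplit : (Pprod c 1 (2*D) : PowerSeries R)
          = Pprod c 1 D * Pprod c (D+1) (2*D) := Pprod_split (by omega) (by omega)
      have : approx D ((Pprod c 1 D : PowerSeries R) * Pprod c (D+1) (2*D))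
          (Pprod c 1 D * 1) := (approx.refl D _).mul (Pprod_approx_one (by
            calc D < 1*(D+1) := by omega
              _ ≤ c*(D+1) := Nat.mul_le_mul_right _ hc))
      rw [hsplit]
      simpa using this.symm
  have h2 := odd_even_split (R := R) c D
  have h3 := oddprod_sq (R := R) c D
  -- Σ·B ≈ θ
  have h4 : approx D ((∑ l ∈ range (2*D+1),
        (-1 : PowerSeries R)^(l+D) * X^(c*eI l D) * Gp R c (2*D) l) * Pprod (2*c) 1 D)
      (thetaR R c) := by
    rw [Finset.sum_mul]
    have hterm : ∀ l ∈ range (2*D+1),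
        approx D ((-1 : PowerSeries R)^(l+D) * X^(c*eI l D) * Gp R c (2*D) l * Pprod (2*c) 1 D)
          ((-1 : PowerSeries R)^(l+D) * X^(c * eI l D)) := by
      intro l hl
      rw [mem_range] at hl
      have hre : (-1 : PowerSeries R)^(l+D) * X^(c*eI l D) * Gp R c (2*D) l * Pprod (2*c) 1 D
          = (-1 : PowerSeries R)^(l+D) * (X^(c*eI l D) * (Gp R c (2*D) l * Pprod (2*c) 1 D)) := by
        ring
      rw [hre]
      rcases le_or_gt (c * eI l D) D with hle | hgt
      · have := (approx.refl D ((-1 : PowerSeries R)^(l+D))).mul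
          (approx_X_pow_mul (a := c * eI l D) (A := Gp R c (2*D) l * Pprod (2*c) 1 D) (B := 1)
            (Or.inr (gpB_approx hc (by omega) hle)))
        simpa using this
      · have h5 := (approx.refl D ((-1 : PowerSeries R)^(l+D))).mul
          (approx_X_pow_mul (A := Gp R c (2*D) l * Pprod (2*c) 1 D) (B := 1) (Or.inl hgt))
        simpa using h5
    exact (approx.sum hterm).trans (theta_sum_approx hc)
  -- assemble
  have hA : approx D ((Pprod c 1 D : PowerSeries R)^2) (Pprod c 1 (2*D)^2) := h1.pow 2
  have hB : (Pprod c 1 (2*D) : PowerSeries R)^2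
      = ((∑ l ∈ range (2*D+1),
          (-1 : PowerSeries R)^(l+D) * X^(c*eI l D) * Gp R c (2*D) l) * Pprod (2*c) 1 D)
        * Pprod (2*c) 1 D := by
    rw [h2, mul_pow, h3]; ring
  have hC : approx D (((∑ l ∈ range (2*D+1),
        (-1 : PowerSeries R)^(l+D) * X^(c*eI l D) * Gp R c (2*D) l) * Pprod (2*c) 1 D)
        * Pprod (2*c) 1 D) (thetaR R c * Pprod (2*c) 1 D) :=
    h4.mul (approx.refl D _)
  refine (hA.trans (hB ▸ hC)).trans ?_
  rw [mul_comm]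
  exact approx.refl D _
end L4

section L5

abbrev Z16 := ZMod 16

theorem sq_mod8 (s : ℕ) : s^2 % 8 = 0 ∨ s^2 % 8 = 1 ∨ s^2 % 8 = 4 := by
  have h2 : s^2 % 8 = (s % 8)^2 % 8 := by rw [Nat.pow_mod]
  have h8 : s % 8 = 0 ∨ s % 8 = 1 ∨ s % 8 = 2 ∨ s % 8 = 3 ∨ s % 8 = 4 ∨ s % 8 = 5 ∨
      s % 8 = 6 ∨ s % 8 = 7 := by omega
  rcases h8 with h8|h8|h8|h8|h8|h8|h8|h8 <;> rw [h2, h8] <;> norm_num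

theorem two_sq_mod8 (s : ℕ) : (2*s^2) % 8 = 0 ∨ (2*s^2) % 8 = 2 := by
  have key : (2*s^2) % 8 = 2 * (s^2 % 4) := by
    have := Nat.mul_mod_mul_left 2 (s^2) 4
    simpa using this
  have h2 : s^2 % 4 = (s % 4)^2 % 4 := by rw [Nat.pow_mod]
  have h4 : s % 4 = 0 ∨ s % 4 = 1 ∨ s % 4 = 2 ∨ s % 4 = 3 := by omega
  have h5 : s^2 % 4 = 0 ∨ s^2 % 4 = 1 := by
    rcases h4 with h4|h4|h4|h4 <;> rw [h2, h4] <;> norm_num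
  omega

theorem coeff_theta_support {c m : ℕ} (h : coeff m (thetaR Z16 c) ≠ 0) (hm : m ≠ 0) :
    ∃ s, m = c * s^2 := by
  by_contra hall
  push_neg at hall
  apply h
  rw [coeff_thetaR, if_neg hm, uc_eq_zero hall]
  norm_num

theorem coeff_theta_two {c m : ℕ} (hm : m ≠ 0) :
    ∃ z, coeff m (thetaR Z16 c) = 2 * z :=
  ⟨((uc c m : ℤ) : Z16), by rw [coeff_thetaR, if_neg hm, zero_add]⟩

/-- The `i`-th factor: θ₁ for `i < j`, θ₂ for `i ≥ j`. -/
noncomputable def gFun (j i : ℕ) : PowerSeries Z16 :=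
  if i < j then thetaR Z16 1 else thetaR Z16 2

/-- nonzero type-1 slots -/
def nzA (j : ℕ) (l : ℕ →₀ ℕ) : Finset ℕ := (Finset.range j).filter (fun i => l i ≠ 0)

theorem mem_nzA {j : ℕ} {l : ℕ →₀ ℕ} {i : ℕ} : i ∈ nzA j l ↔ i < j ∧ l i ≠ 0 := by
  simp [nzA]

noncomputable def swapF (j : ℕ) (l : ℕ →₀ ℕ) : ℕ →₀ ℕ :=
  if h : (nzA j l).card = 2 then
    Finsupp.equivMapDomain
      (Equiv.swap ((nzA j l).min' (Finset.card_pos.mp (by omega)))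
        ((nzA j l).max' (Finset.card_pos.mp (by omega)))) l
  else l

theorem swapF_eq_self {j : ℕ} {l : ℕ →₀ ℕ} (h : ¬ (nzA j l).card = 2) : swapF j l = l := by
  rw [swapF, dif_neg h]

theorem swapF_apply {j : ℕ} {l : ℕ →₀ ℕ} (h : (nzA j l).card = 2)
    (hne : (nzA j l).Nonempty) (x : ℕ) :
    swapF j l x = l (Equiv.swap ((nzA j l).min' hne) ((nzA j l).max' hne) x) := by
  rw [swapF, dif_pos h, Finsupp.equivMapDomain_apply, Equiv.symm_swap]

theorem swap_range_iff {M a b : ℕ} (ha : a < M) (hb : b < M) (i : ℕ) :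
    i ∈ Finset.range M ↔ Equiv.swap a b i ∈ Finset.range M := by
  simp only [Finset.mem_range, Equiv.swap_apply_def]
  split_ifs <;> omega

theorem g_swap {j a b : ℕ} (ha : a < j) (hb : b < j) (i : ℕ) :
    gFun j (Equiv.swap a b i) = gFun j i := by
  rw [Equiv.swap_apply_def]
  split_ifs with h1 h2
  · subst h1; simp [gFun, ha, hb]
  · subst h2; simp [gFun, ha, hb]
  · rfl

theorem nzA_swapF {j : ℕ} {l : ℕ →₀ ℕ} (h : (nzA j l).card = 2)
    (hne : (nzA j l).Nonempty) : nzA j (swapF j l) = nzA j l := by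
  set a := (nzA j l).min' hne with hadef
  set b := (nzA j l).max' hne with hbdef
  have ham : a ∈ nzA j l := Finset.min'_mem _ _
  have hbm : b ∈ nzA j l := Finset.max'_mem _ _
  rw [mem_nzA] at ham hbm
  ext i
  rw [mem_nzA, mem_nzA, swapF_apply h hne i]
  rw [Equiv.swap_apply_def]
  split_ifs with h1 h2
  · subst h1; constructor
    · rintro ⟨h', _⟩; exact ⟨h', ham.2⟩
    · rintro ⟨h', _⟩; exact ⟨h', hbm.2⟩
  · subst h2; constructor
    · rintro ⟨h', _⟩; exact ⟨h', hbm.2⟩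
    · rintro ⟨h', _⟩; exact ⟨h', ham.2⟩
  · exact Iff.rfl

theorem swapF_invol {j : ℕ} (l : ℕ →₀ ℕ) : swapF j (swapF j l) = l := by
  by_cases h : (nzA j l).card = 2
  · have hne : (nzA j l).Nonempty := Finset.card_pos.mp (by omega)
    have hA := nzA_swapF h hne
    have h' : (nzA j (swapF j l)).card = 2 := by rw [hA]; exact h
    have hne' : (nzA j (swapF j l)).Nonempty := Finset.card_pos.mp (by omega)
    apply Finsupp.ext
    intro x
    rw [swapF_apply h' hne' x]
    simp only [hA]
    rw [swapF_apply h hne]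
    rw [Equiv.swap_apply_self]
  · rw [swapF_eq_self, swapF_eq_self h]
    rw [swapF_eq_self h]
    exact h

theorem term_two_pow {j : ℕ} (l : ℕ →₀ ℕ) (F : Finset ℕ) (hF : F ⊆ Finset.range (j+j))
    (hne : ∀ i ∈ F, l i ≠ 0) :
    ∃ z, ∏ i ∈ Finset.range (j+j), coeff (l i) (gFun j i) = 2^(F.card) * z := by
  have hchoice : ∀ i, ∃ z, i ∈ F → coeff (l i) (gFun j i) = 2 * z := by
    intro i
    by_cases hi : i ∈ F
    · obtain ⟨z, hz⟩ : ∃ z, coeff (l i) (gFun j i) = 2*z := by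
        unfold gFun
        split
        · exact coeff_theta_two (hne i hi)
        · exact coeff_theta_two (hne i hi)
      exact ⟨z, fun _ => hz⟩
    · exact ⟨0, fun h => absurd h hi⟩
  choose u hu using hchoice
  refine ⟨(∏ i ∈ F, u i) * ∏ i ∈ Finset.range (j+j) \ F, coeff (l i) (gFun j i), ?_⟩
  rw [← Finset.prod_sdiff hF, Finset.prod_congr rfl (fun i hi => hu i hi),
    Finset.prod_mul_distrib, Finset.prod_const]
  ring

theorem slot_fact {j : ℕ} {l : ℕ →₀ ℕ} {i : ℕ}
    (h : coeff (l i) (gFun j i) ≠ 0) (hi : l i ≠ 0) :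
    (i < j ∧ (l i % 8 = 0 ∨ l i % 8 = 1 ∨ l i % 8 = 4)) ∨
      (¬ i < j ∧ (l i % 8 = 0 ∨ l i % 8 = 2)) := by
  by_cases hij : i < j
  · left
    refine ⟨hij, ?_⟩
    rw [gFun, if_pos hij] at h
    obtain ⟨s, hs⟩ := coeff_theta_support h hi
    rw [hs, one_mul]
    exact sq_mod8 s
  · right
    refine ⟨hij, ?_⟩
    rw [gFun, if_neg hij] at h
    obtain ⟨s, hs⟩ := coeff_theta_support h hi
    rw [hs]
    exact two_sq_mod8 s

theorem mk_pattern {jj : ℕ} {l : ℕ →₀ ℕ} (x y z : ℕ)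
    (hiff : ∀ i, l i ≠ 0 ↔ (i = x ∨ i = y ∨ i = z))
    (hxj : x < jj) (hyj : y < jj) (hzj : ¬ z < jj)
    (hx8 : l x % 8 = 1) (hy8 : l y % 8 = 4) :
    ∃ p q, p ≠ q ∧ nzA jj l = {p, q} ∧ l p ≠ l q := by
  have hxy : x ≠ y := by intro h; rw [h] at hx8; omega
  refine ⟨x, y, hxy, ?_, by omega⟩
  ext i
  rw [mem_nzA]
  simp only [Finset.mem_insert, Finset.mem_singleton]
  rw [hiff i]
  constructor
  · rintro ⟨hij, (rfl|rfl|rfl)⟩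
    · exact Or.inl rfl
    · exact Or.inr rfl
    · exact absurd hij hzj
  · rintro (rfl|rfl)
    · exact ⟨hxj, Or.inl rfl⟩
    · exact ⟨hyj, Or.inr (Or.inl rfl)⟩

theorem classify {j N : ℕ} (hN : N % 8 = 7) (l : ℕ →₀ ℕ)
    (hsum : ∑ i ∈ Finset.range (j+j), l i = N)
    (hsupp : l.support ⊆ Finset.range (j+j))
    (hfac : ∀ i ∈ Finset.range (j+j), coeff (l i) (gFun j i) ≠ 0)
    (hcard : l.support.card ≤ 3) :
    l.support.card = 3 ∧ ∃ p q, p ≠ q ∧ nzA j l = {p, q} ∧ l p ≠ l q := by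
  have hsum2 : ∑ i ∈ l.support, l i = N :=
    (Finset.sum_subset hsupp (fun x _ hx => Finsupp.notMem_support_iff.mp hx)).trans hsum
  have hcases : l.support.card = 0 ∨ l.support.card = 1 ∨ l.support.card = 2 ∨
      l.support.card = 3 := by omega
  rcases hcases with hc | hc | hc | hc
  · exfalso
    rw [Finset.card_eq_zero.mp hc, Finset.sum_empty] at hsum2
    omega
  · exfalso
    obtain ⟨x, hx⟩ := Finset.card_eq_one.mp hc
    have hxs : x ∈ l.support := by rw [hx]; exact Finset.mem_singleton_self x
    have hlx : l x ≠ 0 := Finsupp.mem_support_iff.mp hxs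
    rw [hx, Finset.sum_singleton] at hsum2
    have fx := slot_fact (hfac x (hsupp hxs)) hlx
    rcases fx with ⟨_, h8|h8|h8⟩|⟨_, h8|h8⟩ <;> omega
  · exfalso
    obtain ⟨x, y, hxy, hs⟩ := Finset.card_eq_two.mp hc
    have hxs : x ∈ l.support := by rw [hs]; simp
    have hys : y ∈ l.support := by rw [hs]; simp
    have hlx : l x ≠ 0 := Finsupp.mem_support_iff.mp hxs
    have hly : l y ≠ 0 := Finsupp.mem_support_iff.mp hys
    rw [hs, Finset.sum_insert (by simpa using hxy), Finset.sum_singleton] at hsum2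
    have fx := slot_fact (hfac x (hsupp hxs)) hlx
    have fy := slot_fact (hfac y (hsupp hys)) hly
    rcases fx with ⟨_, hx8|hx8|hx8⟩|⟨_, hx8|hx8⟩ <;>
      rcases fy with ⟨_, hy8|hy8|hy8⟩|⟨_, hy8|hy8⟩ <;> omega
  · refine ⟨hc, ?_⟩
    obtain ⟨x, y, z, hxy, hxz, hyz, hs⟩ := Finset.card_eq_three.mp hc
    have hxs : x ∈ l.support := by rw [hs]; simp
    have hys : y ∈ l.support := by rw [hs]; simp
    have hzs : z ∈ l.support := by rw [hs]; simp
    have hlx : l x ≠ 0 := Finsupp.mem_support_iff.mp hxs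
    have hly : l y ≠ 0 := Finsupp.mem_support_iff.mp hys
    have hlz : l z ≠ 0 := Finsupp.mem_support_iff.mp hzs
    have hiff : ∀ i, l i ≠ 0 ↔ (i = x ∨ i = y ∨ i = z) := by
      intro i
      rw [← Finsupp.mem_support_iff, hs]
      simp
    rw [hs, Finset.sum_insert (by simp [hxy, hxz]),
      Finset.sum_insert (by simpa using hyz), Finset.sum_singleton] at hsum2
    have fx := slot_fact (hfac x (hsupp hxs)) hlx
    have fy := slot_fact (hfac y (hsupp hys)) hly
    have fz := slot_fact (hfac z (hsupp hzs)) hlz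
    rcases fx with ⟨hxlt, hx8|hx8|hx8⟩|⟨hxge, hx8|hx8⟩ <;>
      rcases fy with ⟨hylt, hy8|hy8|hy8⟩|⟨hyge, hy8|hy8⟩ <;>
        rcases fz with ⟨hzlt, hz8|hz8|hz8⟩|⟨hzge, hz8|hz8⟩ <;>
    first
    | omega
    | exact mk_pattern x y z (fun i => (hiff i).trans (by tauto)) hxlt hylt hzge hx8 hy8
    | exact mk_pattern y x z (fun i => (hiff i).trans (by tauto)) hylt hxlt hzge hy8 hx8
    | exact mk_pattern x z y (fun i => (hiff i).trans (by tauto)) hxlt hzlt hyge hx8 hz8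
    | exact mk_pattern z x y (fun i => (hiff i).trans (by tauto)) hzlt hxlt hyge hz8 hx8
    | exact mk_pattern y z x (fun i => (hiff i).trans (by tauto)) hylt hzlt hxge hy8 hz8
    | exact mk_pattern z y x (fun i => (hiff i).trans (by tauto)) hzlt hylt hxge hz8 hy8

end L5

section L6

theorem term_eq_zero_of_card_ge {j : ℕ} (l : ℕ →₀ ℕ)
    (hsupp : l.support ⊆ Finset.range (j+j)) (h4 : 4 ≤ l.support.card) :
    ∏ i ∈ Finset.range (j+j), coeff (l i) (gFun j i) = 0 := by
  obtain ⟨F, hFsub, hFcard⟩ := Finset.exists_subset_card_eq h4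
  obtain ⟨z, hz⟩ := term_two_pow l F (hFsub.trans hsupp)
    (fun i hi => Finsupp.mem_support_iff.mp (hFsub hi))
  rw [hz, hFcard]
  have h16 : (2 : Z16)^4 = 0 := by decide
  rw [h16, zero_mul]

theorem two_mul_term {j N n : ℕ} (hN : N = 8*n+7) (l : ℕ →₀ ℕ)
    (hsum : ∑ i ∈ Finset.range (j+j), l i = N)
    (hsupp : l.support ⊆ Finset.range (j+j)) :
    (∏ i ∈ Finset.range (j+j), coeff (l i) (gFun j i))
      + ∏ i ∈ Finset.range (j+j), coeff (l i) (gFun j i) = 0 := by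
  rcases le_or_gt 4 l.support.card with h4 | h3
  · rw [term_eq_zero_of_card_ge l hsupp h4, zero_add]
  · by_cases hT : (∏ i ∈ Finset.range (j+j), coeff (l i) (gFun j i)) = 0
    · rw [hT, zero_add]
    · have hfac : ∀ i ∈ Finset.range (j+j), coeff (l i) (gFun j i) ≠ 0 := by
        intro i hi hzero
        exact hT (Finset.prod_eq_zero hi hzero)
      obtain ⟨hc3, -⟩ := classify (by omega : N % 8 = 7) l hsum hsupp hfac (by omega)
      obtain ⟨z, hz⟩ := term_two_pow l l.support hsupp
        (fun i hi => Finsupp.mem_support_iff.mp hi)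
      rw [hz, hc3]
      have h16 : (2:Z16)^3 + 2^3 = 0 := by decide
      calc (2:Z16)^3*z + 2^3*z = ((2:Z16)^3 + 2^3)*z := by ring
        _ = 0 := by rw [h16, zero_mul]

theorem termT_swap {j : ℕ} {l : ℕ →₀ ℕ} (h : (nzA j l).card = 2) :
    ∏ i ∈ Finset.range (j+j), coeff ((swapF j l) i) (gFun j i)
    = ∏ i ∈ Finset.range (j+j), coeff (l i) (gFun j i) := by
  have hne : (nzA j l).Nonempty := Finset.card_pos.mp (by omega)
  have ham : (nzA j l).min' hne ∈ nzA j l := Finset.min'_mem _ _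
  have hbm : (nzA j l).max' hne ∈ nzA j l := Finset.max'_mem _ _
  rw [mem_nzA] at ham hbm
  refine Finset.prod_equiv (Equiv.swap ((nzA j l).min' hne) ((nzA j l).max' hne))
    (fun i => swap_range_iff (by omega) (by omega) i) ?_
  intro i _
  rw [swapF_apply h hne i, g_swap ham.1 hbm.1 i]

theorem counting (n r : ℕ) :
    coeff (8*n+7) ((thetaR Z16 1 * thetaR Z16 2)^(2*r+1)) = 0 := by
  set j := 2*r+1 with hjdef
  set N := 8*n+7 with hNdef
  have hprod : (thetaR Z16 1 * thetaR Z16 2)^j = ∏ i ∈ Finset.range (j+j), gFun j i := by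
    rw [Finset.prod_range_add (fun i => gFun j i) j j]
    rw [Finset.prod_congr rfl (fun i (hi : i ∈ Finset.range j) =>
        (by rw [Finset.mem_range] at hi; rw [gFun, if_pos hi] : gFun j i = thetaR Z16 1)),
      Finset.prod_congr rfl (fun i (hi : i ∈ Finset.range j) =>
        (by rw [gFun, if_neg (by omega)] : gFun j (j+i) = thetaR Z16 2))]
    rw [Finset.prod_const, Finset.prod_const, Finset.card_range, mul_pow]
  rw [hprod, coeff_prod]
  refine Finset.sum_involution (fun l _ => swapF j l) ?_ ?_ ?_ ?_
  · -- f a + f (g a) = 0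
    intro l hl
    rw [Finset.mem_finsuppAntidiag] at hl
    show (∏ i ∈ Finset.range (j+j), coeff (l i) (gFun j i))
      + ∏ i ∈ Finset.range (j+j), coeff ((swapF j l) i) (gFun j i) = 0
    by_cases h2 : (nzA j l).card = 2
    · rw [termT_swap h2]
      exact two_mul_term hNdef l hl.1 hl.2
    · rw [swapF_eq_self h2]
      exact two_mul_term hNdef l hl.1 hl.2
  · -- f a ≠ 0 → g a ≠ a
    intro l hl hT
    show swapF j l ≠ l
    rw [Finset.mem_finsuppAntidiag] at hl
    have hfac : ∀ i ∈ Finset.range (j+j), coeff (l i) (gFun j i) ≠ 0 := by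
      intro i hi hzero
      exact hT (Finset.prod_eq_zero hi hzero)
    have hcard3 : l.support.card ≤ 3 := by
      by_contra h4
      exact hT (term_eq_zero_of_card_ge l hl.2 (by omega))
    obtain ⟨hc3, p, q, hpq, hA, hlpq⟩ :=
      classify (by omega : N % 8 = 7) l hl.1 hl.2 hfac hcard3
    have h2 : (nzA j l).card = 2 := by rw [hA]; exact Finset.card_pair hpq
    have hne : (nzA j l).Nonempty := Finset.card_pos.mp (by omega)
    have hab : (nzA j l).min' hne ≠ (nzA j l).max' hne :=
      ne_of_lt (Finset.min'_lt_max'_of_card _ (by omega))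
    have ham : (nzA j l).min' hne ∈ ({p, q} : Finset ℕ) := by
      rw [← hA]; exact Finset.min'_mem _ _
    have hbm : (nzA j l).max' hne ∈ ({p, q} : Finset ℕ) := by
      rw [← hA]; exact Finset.max'_mem _ _
    simp only [Finset.mem_insert, Finset.mem_singleton] at ham hbm
    have hvals : l ((nzA j l).min' hne) ≠ l ((nzA j l).max' hne) := by
      rcases ham with rfl | h1 <;> rcases hbm with h2' | h2'
      · exact absurd h2'.symm hab
      · rw [h2']; exact hlpq
      · rw [h1, h2']; exact hlpq.symm
      · rw [h1] at hab ⊢; exact absurd h2'.symm hab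
    intro heq
    have h1 : swapF j l ((nzA j l).min' hne) = l ((nzA j l).max' hne) := by
      rw [swapF_apply h2 hne, Equiv.swap_apply_left]
    rw [heq] at h1
    exact hvals h1
  · -- g a ∈ s
    intro l hl
    show swapF j l ∈ (Finset.range (j+j)).finsuppAntidiag N
    rw [Finset.mem_finsuppAntidiag] at hl ⊢
    by_cases h2 : (nzA j l).card = 2
    · have hne : (nzA j l).Nonempty := Finset.card_pos.mp (by omega)
      have ham : (nzA j l).min' hne ∈ nzA j l := Finset.min'_mem _ _
      have hbm : (nzA j l).max' hne ∈ nzA j l := Finset.max'_mem _ _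
      rw [mem_nzA] at ham hbm
      constructor
      · rw [← hl.1, Finset.sum_congr rfl (fun i _ => swapF_apply h2 hne i)]
        exact Finset.sum_equiv (Equiv.swap ((nzA j l).min' hne) ((nzA j l).max' hne))
          (fun i => swap_range_iff (by omega) (by omega) i) (fun i _ => rfl)
      · intro x hx
        rw [Finsupp.mem_support_iff, swapF_apply h2 hne x] at hx
        have hmem := hl.2 (Finsupp.mem_support_iff.mpr hx)
        exact (swap_range_iff (show (nzA j l).min' hne < j+j by omega)
          (show (nzA j l).max' hne < j+j by omega) x).mpr hmem
    · rw [swapF_eq_self h2]; exact hl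
  · -- involution
    intro l _
    exact swapF_invol l

theorem one_add_two_mul_pow_eight (S : PowerSeries Z16) :
    (1 + C (2:Z16) * S)^8 = 1 := by
  have key : ∀ (i c : ℕ), ((2:Z16)^i * (c : Z16) = 0) →
      (C (2:Z16) * S)^i * ((c : ℕ) : PowerSeries Z16) = 0 := by
    intro i c h
    have hc : ((c : ℕ) : PowerSeries Z16) = C ((c : ℕ) : Z16) := by
      rw [map_natCast]
    rw [mul_pow, hc, show (C (2:Z16))^i * S^i * C ((c:ℕ) : Z16)
        = ((C (2:Z16))^i * C ((c:ℕ):Z16)) * S^i from by ring,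
      ← map_pow, ← map_mul, h, map_zero, zero_mul]
  rw [show (1 : PowerSeries Z16) + C (2:Z16) * S = C (2:Z16) * S + 1 from by ring, add_pow]
  simp only [one_pow, mul_one]
  rw [Finset.sum_range_succ, Finset.sum_range_succ, Finset.sum_range_succ,
    Finset.sum_range_succ, Finset.sum_range_succ, Finset.sum_range_succ,
    Finset.sum_range_succ, Finset.sum_range_succ, Finset.sum_range_succ,
    Finset.sum_range_zero]
  rw [key 1 (Nat.choose 8 1) (by decide), key 2 (Nat.choose 8 2) (by decide),
    key 3 (Nat.choose 8 3) (by decide), key 4 (Nat.choose 8 4) (by decide),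
    key 5 (Nat.choose 8 5) (by decide), key 6 (Nat.choose 8 6) (by decide),
    key 7 (Nat.choose 8 7) (by decide), key 8 (Nat.choose 8 8) (by decide)]
  simp

theorem w_pow_eight : (thetaR Z16 1 * thetaR Z16 2)^8 = 1 := by
  have h : thetaR Z16 1 * thetaR Z16 2
      = 1 + C (2:Z16) * (PowerSeries.mk (fun m => ((uc 1 m : ℤ) : Z16))
        + PowerSeries.mk (fun m => ((uc 2 m : ℤ) : Z16))
        + C (2:Z16) * (PowerSeries.mk (fun m => ((uc 1 m : ℤ) : Z16))
            * PowerSeries.mk (fun m => ((uc 2 m : ℤ) : Z16)))) := by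
    rw [thetaR, thetaR]; ring
  rw [h, one_add_two_mul_pow_eight]

end L6

/-- `b m n` is the `n`-th coefficient of `f₄ᵐ / (f₁^{2m} f₂ᵐ)`, the number of
overcubic partition `m`-tuples of `n`. -/
noncomputable def b (m n : ℕ) : ℤ :=
  PowerSeries.coeff (R := ℤ) n
    ((fTrunc 4 n) ^ m * PowerSeries.invOfUnit ((fTrunc 1 n) ^ (2 * m) * (fTrunc 2 n) ^ m) 1)


theorem map_fTrunc_s18 (k N : ℕ) :
    PowerSeries.map (Int.castRingHom Z16) (fTrunc k N) = (Pprod k 1 N : PowerSeries Z16) := by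
  rw [fTrunc, Pprod, map_prod]
  refine Finset.prod_congr rfl fun i _ => ?_
  rw [map_sub, map_one, map_pow, PowerSeries.map_X]

theorem const_fTrunc {k : ℕ} (hk : 1 ≤ k) (N : ℕ) : constantCoeff (R := ℤ) (fTrunc k N) = 1 := by
  rw [fTrunc, map_prod]
  refine Finset.prod_eq_one fun i hi => ?_
  rw [Finset.mem_Icc] at hi
  rw [map_sub, map_one, map_pow, constantCoeff_X, zero_pow (Nat.mul_ne_zero (by omega) (by omega)), sub_zero]

theorem stmt18 (n k : ℕ) : b (2 * k + 1) (8 * n + 7) ≡ 0 [ZMOD 16] := by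
  set m := 2*k+1 with hm
  set D := 8*n+7 with hD
  set π : PowerSeries ℤ →+* PowerSeries Z16 := PowerSeries.map (Int.castRingHom Z16) with hπ
  set u : PowerSeries ℤ := (fTrunc 1 D)^(2*m) * (fTrunc 2 D)^m with hu
  set V : PowerSeries ℤ := PowerSeries.invOfUnit u 1 with hV
  have hcu : constantCoeff (R := ℤ) u = 1 := by
    rw [hu, map_mul, map_pow, map_pow, const_fTrunc (by norm_num), const_fTrunc (by norm_num),
      one_pow, one_pow, one_mul]
  have huV : u * V = 1 := PowerSeries.mul_invOfUnit u 1 (by rw [hcu]; rfl)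
  have hπuV : π u * π V = 1 := by rw [← map_mul, huV, map_one]
  have G1 : approx D ((Pprod 1 1 D : PowerSeries Z16)^2) (Pprod 2 1 D * thetaR Z16 1) := by
    have := gauss Z16 (c := 1) (by norm_num) D
    rwa [show 2*1 = 2 from rfl] at this
  have G2 : approx D ((Pprod 2 1 D : PowerSeries Z16)^2) (Pprod 4 1 D * thetaR Z16 2) := by
    have := gauss Z16 (c := 2) (by norm_num) D
    rwa [show 2*2 = 4 from rfl] at this
  set θ1 := thetaR Z16 1 with hθ1
  set θ2 := thetaR Z16 2 with hθ2
  set w := θ1 * θ2 with hw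
  have happ : approx D (π u) ((Pprod 4 1 D : PowerSeries Z16)^m * w^m) := by
    have e0 : π u = ((Pprod 1 1 D : PowerSeries Z16)^2)^m * (Pprod 2 1 D)^m := by
      rw [hu, map_mul, map_pow, map_pow, map_fTrunc_s18, map_fTrunc_s18, ← pow_mul]
    rw [e0]
    have a1 : approx D (((Pprod 1 1 D : PowerSeries Z16)^2)^m * (Pprod 2 1 D)^m)
        ((Pprod 2 1 D * θ1)^m * (Pprod 2 1 D)^m) := (G1.pow m).mul (approx.refl _ _)
    have e1 : ((Pprod 2 1 D : PowerSeries Z16) * θ1)^m * (Pprod 2 1 D)^m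
        = ((Pprod 2 1 D)^2)^m * θ1^m := by ring
    have a2 : approx D (((Pprod 2 1 D : PowerSeries Z16)^2)^m * θ1^m)
        ((Pprod 4 1 D * θ2)^m * θ1^m) := (G2.pow m).mul (approx.refl _ _)
    have a2' : approx D (((Pprod 2 1 D : PowerSeries Z16) * θ1)^m * (Pprod 2 1 D)^m)
        ((Pprod 4 1 D * θ2)^m * θ1^m) := by rw [e1]; exact a2
    have a3 : approx D (((Pprod 4 1 D : PowerSeries Z16) * θ2)^m * θ1^m)
        ((Pprod 4 1 D)^m * w^m) := by
      rw [show ((Pprod 4 1 D : PowerSeries Z16) * θ2)^m * θ1^m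
        = (Pprod 4 1 D)^m * w^m from by rw [hw]; ring]
      exact approx.refl D _
    exact (a1.trans a2').trans a3
  have h2 : approx D (((Pprod 4 1 D : PowerSeries Z16)^m * π V) * w^m) 1 := by
    have h2a : approx D (((Pprod 4 1 D : PowerSeries Z16)^m * w^m) * π V) (π u * π V) :=
      happ.symm.mul (approx.refl D (π V))
    rw [hπuV] at h2a
    rw [show ((Pprod 4 1 D : PowerSeries Z16)^m * π V) * w^m
      = ((Pprod 4 1 D)^m * w^m) * π V from by ring]
    exact h2a
  set rr := 6*k+7 with hrr
  have hwp : w^rr * w^m = 1 := by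
    rw [← pow_add, show rr + m = 8*(k+1) from by omega, pow_mul, hw, hθ1, hθ2, w_pow_eight,
      one_pow]
  have h4 : approx D ((Pprod 4 1 D : PowerSeries Z16)^m * π V) (w^rr) := by
    have e : (Pprod 4 1 D : PowerSeries Z16)^m * π V
        = (((Pprod 4 1 D)^m * π V) * w^m) * w^rr := by
      linear_combination (-((Pprod 4 1 D : PowerSeries Z16)^m * π V)) * hwp
    rw [e]
    have h5 := h2.mul (approx.refl D (w^rr))
    simpa using h5
  have hfinal : coeff D ((Pprod 4 1 D : PowerSeries Z16)^m * π V) = 0 := by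
    rw [h4 D (le_refl D)]
    have hcount := counting n (3*k+3)
    rw [show 2*(3*k+3)+1 = rr from by omega] at hcount
    rw [hw, hθ1, hθ2]
    exact hcount
  have hb : ((b m D : ℤ) : Z16) = coeff D (π ((fTrunc 4 D)^m * V)) := by
    rw [hπ, PowerSeries.coeff_map]
    rfl
  have hπE : π ((fTrunc 4 D)^m * V) = (Pprod 4 1 D : PowerSeries Z16)^m * π V := by
    rw [map_mul, map_pow, hπ, map_fTrunc_s18]
  have hzero : ((b m D : ℤ) : Z16) = 0 := by rw [hb, hπE, hfinal]
  have hdvd : (16 : ℤ) ∣ b m D := by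
    have := (ZMod.intCast_zmod_eq_zero_iff_dvd (b m D) 16).mp hzero
    exact_mod_cast this
  exact Int.modEq_zero_iff_dvd.mpr hdvd
end

section
/- Let p ≥ 3 be prime, let r with 1 ≤ r ≤ p-1 be a quadratic nonresidue modulo p, and set R = r if r is odd and R = p + r if r is even. Then for all integers n ≥ 0 and k ≥ 0, b_{2k+1}(2pn + R) ≡ 0 (mod 4), where b_m denotes the overcubic partition m-tuples function. -/
open PowerSeries

namespace Stmt19Aux

open Finset

/-! ### Generalities in `ZMod 4` power series -/

lemma two_ps : (2 : PowerSeries (ZMod 2)) = 0 := by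
  rw [← map_ofNat (C (R := ZMod 2)) 2, show (OfNat.ofNat 2 : ZMod 2) = 0 from rfl, map_zero]

lemma four_ps : (4 : PowerSeries (ZMod 4)) = 0 := by
  rw [← map_ofNat (C (R := ZMod 4)) 4, show (OfNat.ofNat 4 : ZMod 4) = 0 from rfl, map_zero]

/-- The reduction map from power series over `ZMod 4` to power series over `ZMod 2`. -/
noncomputable def m2 : PowerSeries (ZMod 4) →+* PowerSeries (ZMod 2) :=
  PowerSeries.map (ZMod.castHom (show 2 ∣ 4 by norm_num) (ZMod 2))

lemma zfact1 : ∀ a b : ZMod 4,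
    (ZMod.castHom (show 2 ∣ 4 by norm_num) (ZMod 2)) a
      = (ZMod.castHom (show 2 ∣ 4 by norm_num) (ZMod 2)) b → 2*a = 2*b := by decide

lemma zfact2 : ∀ a b : ZMod 4,
    (ZMod.castHom (show 2 ∣ 4 by norm_num) (ZMod 2)) a = 0 →
    (ZMod.castHom (show 2 ∣ 4 by norm_num) (ZMod 2)) b = 0 → a * b = 0 := by decide

lemma two_mul_eq {A B : PowerSeries (ZMod 4)} (h : m2 A = m2 B) : 2 * A = 2 * B := by
  have h2 : (2 : PowerSeries (ZMod 4)) = C (R := ZMod 4) 2 := (map_ofNat (C (R := ZMod 4)) 2).symm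
  ext n
  rw [h2, coeff_C_mul, coeff_C_mul]
  apply zfact1
  have := congrArg (coeff (R := ZMod 2) n) h
  simpa [m2, coeff_map] using this

lemma sq_eq {A B : PowerSeries (ZMod 4)} (h : m2 A = m2 B) : A ^ 2 = B ^ 2 := by
  have hD : 2 * (A - B) = 0 := by
    have : m2 (A - B) = m2 0 := by rw [map_sub, h, sub_self, map_zero]
    simpa using two_mul_eq this
  have hDD : (A - B) * (A - B) = 0 := by
    ext n
    rw [coeff_mul, map_zero]
    apply Finset.sum_eq_zero
    intro x _
    apply zfact2
    · have := congrArg (coeff (R := ZMod 2) x.1) (show m2 (A-B) = 0 by rw [map_sub, h, sub_self])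
      simpa only [m2, coeff_map, map_zero] using this
    · have := congrArg (coeff (R := ZMod 2) x.2) (show m2 (A-B) = 0 by rw [map_sub, h, sub_self])
      simpa only [m2, coeff_map, map_zero] using this
  have : A ^ 2 = B ^ 2 + (A - B) * (A - B) + (2 * (A - B)) * B := by ring
  rw [this, hD, hDD]; ring

/-! ### The geometric series `1/(1 - X^k)` -/

noncomputable def geom (R : Type*) [CommRing R] (k : ℕ) : PowerSeries R :=
  PowerSeries.mk fun n => if k ∣ n then 1 else 0

lemma coeff_geom (R : Type*) [CommRing R] (k n : ℕ) :
    coeff (R := R) n (geom R k) = if k ∣ n then 1 else 0 := coeff_mk n _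

lemma one_sub_X_pow_mul_geom (R : Type*) [CommRing R] {k : ℕ} (hk : k ≠ 0) :
    ((1 - X ^ k) * geom R k : PowerSeries R) = 1 := by
  ext n
  rw [sub_mul, one_mul, map_sub, coeff_X_pow_mul', coeff_one, coeff_geom]
  rcases eq_or_ne n 0 with rfl | hn
  · rw [if_pos rfl, if_pos (dvd_zero k), if_neg (by omega)]
    ring
  · rw [if_neg hn]
    by_cases hkn : k ≤ n
    · rw [if_pos hkn, coeff_geom]
      have : k ∣ n ↔ k ∣ n - k := by
        constructor
        · exact fun h => Nat.dvd_sub h dvd_rfl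
        · intro h
          have h2 : n - k + k = n := by omega
          exact h2 ▸ Nat.dvd_add h dvd_rfl
      by_cases hd : k ∣ n
      · rw [if_pos hd, if_pos (this.mp hd), sub_self]
      · rw [if_neg hd, if_neg (fun hc => hd (this.mpr hc)), sub_self]
    · rw [if_neg hkn, if_neg (fun h => hkn (Nat.le_of_dvd (Nat.pos_of_ne_zero hn) h)), sub_zero]

/-! ### Per-factor identities -/

lemma fresh (j : ℕ) : ((1 - X ^ j : PowerSeries (ZMod 2)))^2 = 1 - X ^ (2*j) := by
  rw [pow_mul']
  linear_combination (((X:PowerSeries (ZMod 2))^j)^2 - X^j) * two_ps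

lemma m2_geom (k : ℕ) : m2 (geom (ZMod 4) k) = geom (ZMod 2) k := by
  ext n
  simp only [m2, coeff_map, coeff_geom]
  split_ifs <;> decide

lemma per_factor {a : ℕ} (ha : a ≠ 0) :
    ((1 - X ^ a)^2 * (1 - X ^ (2*a)) * (1 + 2 * (X ^ a * geom (ZMod 4) (2*a)))
      : PowerSeries (ZMod 4)) = 1 - X ^ (4*a) := by
  have hexp : ((1 - X ^ a)^2 * (1 - X ^ (2*a)) : PowerSeries (ZMod 4))
      = (1 - X^(4*a)) - 2*(X^a * (1 - X^(2*a))) := by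
    simp only [pow_mul']
    ring
  rw [hexp]
  have h2T : 2 * ((1 - X^(4*a) : PowerSeries (ZMod 4)) * (X ^ a * geom (ZMod 4) (2*a)))
      = 2 * (X^a * (1 - X^(2*a))) := by
    apply two_mul_eq
    have h2a : (2*a) ≠ 0 := by omega
    rw [map_mul, map_mul, map_mul, m2_geom]
    simp only [m2, map_sub, map_one, map_pow, PowerSeries.map_X]
    rw [show (4*a) = 2*(2*a) by ring, ← fresh (2*a)]
    have : ((1 - X ^ (2*a) : PowerSeries (ZMod 2)))^2 * (X ^ a * geom (ZMod 2) (2*a))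
        = (X ^ a * (1 - X^(2*a))) * ((1 - X ^ (2*a)) * geom (ZMod 2) (2*a)) := by ring
    rw [this, one_sub_X_pow_mul_geom _ h2a, mul_one]
  have expand : (((1 - X^(4*a)) - 2*(X^a * (1 - X^(2*a))))
        * (1 + 2 * (X ^ a * geom (ZMod 4) (2*a))) : PowerSeries (ZMod 4))
      = (1 - X^(4*a)) + (2 * ((1 - X^(4*a)) * (X ^ a * geom (ZMod 4) (2*a)))
          - 2*(X^a * (1 - X^(2*a))))
        - 4 * ((X^a * (1 - X^(2*a))) * (X ^ a * geom (ZMod 4) (2*a))) := by ring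
  rw [expand, four_ps, h2T]
  ring

lemma key (s : Finset ℕ) (hs : ∀ i ∈ s, i ≠ 0) :
    ((∏ i ∈ s, (1 - X ^ i)^2 * (1 - X ^ (2*i))) *
      (1 + 2 * ∑ i ∈ s, X ^ i * geom (ZMod 4) (2*i)) : PowerSeries (ZMod 4))
    = ∏ i ∈ s, (1 - X ^ (4*i)) := by
  classical
  induction s using Finset.induction with
  | empty => simp
  | @insert a s ha ih =>
    rw [prod_insert ha, prod_insert ha, sum_insert ha]
    have hsplit : (1 + 2 * ((X:PowerSeries (ZMod 4)) ^ a * geom (ZMod 4) (2*a)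
        + ∑ i ∈ s, X ^ i * geom (ZMod 4) (2*i)))
        = (1 + 2 * (X ^ a * geom (ZMod 4) (2*a)))
          * (1 + 2 * ∑ i ∈ s, X ^ i * geom (ZMod 4) (2*i)) := by
      linear_combination (-((X:PowerSeries (ZMod 4)) ^ a * geom (ZMod 4) (2*a))
        * (∑ i ∈ s, X ^ i * geom (ZMod 4) (2*i))) * four_ps
    rw [hsplit, ← ih (fun i hi => hs i (mem_insert_of_mem hi)),
      ← per_factor (hs a (mem_insert_self a s))]
    ring

/-! ### The truncated products over `ZMod 4` -/

noncomputable def G (j N : ℕ) : PowerSeries (ZMod 4) :=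
  ∏ i ∈ Finset.Icc 1 N, (1 - X ^ (j * i))

lemma map_fTrunc (j N : ℕ) :
    PowerSeries.map (Int.castRingHom (ZMod 4)) (fTrunc j N) = G j N := by
  rw [fTrunc, G, map_prod]
  exact Finset.prod_congr rfl fun i _ => by
    rw [map_sub, map_one, map_pow, PowerSeries.map_X]

lemma constCoeff_fTrunc (j N : ℕ) (hj : j ≠ 0) : constantCoeff (R := ℤ) (fTrunc j N) = 1 := by
  rw [fTrunc, map_prod]
  apply Finset.prod_eq_one
  intro i hi
  rw [map_sub, map_one, map_pow, constantCoeff_X, zero_pow, sub_zero]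
  have := (Finset.mem_Icc.mp hi).1
  positivity

lemma m2_G_sq (j N : ℕ) : m2 ((G j N)^2) = m2 (G (2*j) N) := by
  rw [G, G, ← Finset.prod_pow, map_prod, map_prod]
  apply Finset.prod_congr rfl
  intro i _
  simp only [m2, map_pow, map_sub, map_one, PowerSeries.map_X]
  rw [fresh, mul_assoc]

lemma G_sq_sq (j N : ℕ) : (G j N)^4 = (G (2*j) N)^2 := by
  have := sq_eq (m2_G_sq j N)
  rwa [← pow_mul] at this

/-! ### The main coefficient computation -/

lemma main_coeff (N m k : ℕ) (hm : m = 2*k+1) (hN : N ≠ 0) :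
    ((b m N : ℤ) : ZMod 4)
      = 2 * ∑ i ∈ Icc 1 N, (if 2*i ∣ N - i then (1:ZMod 4) else 0) := by
  set π := Int.castRingHom (ZMod 4) with hπ
  have hconst : constantCoeff (R := ℤ) ((fTrunc 1 N)^(2*m) * (fTrunc 2 N)^m) = ((1:ℤˣ):ℤ) := by
    rw [map_mul, map_pow, map_pow, constCoeff_fTrunc, constCoeff_fTrunc] <;> norm_num
  set B := PowerSeries.map π (PowerSeries.invOfUnit ((fTrunc 1 N)^(2*m) * (fTrunc 2 N)^m) 1)
    with hB
  have hmapA : PowerSeries.map π ((fTrunc 1 N)^(2*m) * (fTrunc 2 N)^m)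
      = (G 1 N)^(2*m) * (G 2 N)^m := by
    rw [map_mul, map_pow, map_pow, map_fTrunc, map_fTrunc]
  have hAB : ((G 1 N)^(2*m) * (G 2 N)^m) * B = 1 := by
    rw [← hmapA, hB, ← map_mul, PowerSeries.mul_invOfUnit _ _ hconst, map_one]
  have hcast : ((b m N : ℤ) : ZMod 4) = coeff (R := ZMod 4) N ((G 4 N)^m * B) := by
    rw [b, show ∀ x : ℤ, (x : ZMod 4) = π x from fun _ => rfl, ← coeff_map, map_mul, map_pow,
      map_fTrunc]
  set E : PowerSeries (ZMod 4) := ∑ i ∈ Icc 1 N, X ^ i * geom (ZMod 4) (2*i) with hE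
  have hKey : (G 1 N)^2 * (G 2 N) * (1 + 2*E) = G 4 N := by
    have hk2 := key (Icc 1 N) (fun i hi => by have := (mem_Icc.mp hi).1; omega)
    rw [Finset.prod_mul_distrib, Finset.prod_pow] at hk2
    rw [G, G, G]
    simpa [one_mul] using hk2
  have hc1 : (G 1 N)^4 = (G 2 N)^2 := by
    have := G_sq_sq 1 N; rwa [show 2*1 = 2 from rfl] at this
  have hc2 : (G 2 N)^4 = (G 4 N)^2 := by
    have := G_sq_sq 2 N; rwa [show 2*2 = 4 from rfl] at this
  have hA' : (G 1 N)^(2*m) * (G 2 N)^m = ((G 1 N)^2 * G 2 N) * (G 4 N)^(2*k) := by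
    subst hm
    calc (G 1 N)^(2*(2*k+1)) * (G 2 N)^(2*k+1)
        = ((G 1 N)^4)^k * (G 1 N)^2 * (G 2 N)^(2*k+1) := by
          rw [show 2*(2*k+1) = 4*k+2 by ring, pow_add, pow_mul]
      _ = ((G 2 N)^2)^k * (G 1 N)^2 * (G 2 N)^(2*k+1) := by rw [hc1]
      _ = ((G 1 N)^2 * G 2 N) * ((G 2 N)^4)^k := by ring
      _ = ((G 1 N)^2 * G 2 N) * (G 4 N)^(2*k) := by
          rw [hc2, ← pow_mul, Nat.mul_comm]
  have h1 : ((G 1 N)^(2*m) * (G 2 N)^m) * (1 + 2*E) = (G 4 N)^m := by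
    rw [hA']
    calc ((G 1 N)^2 * G 2 N) * (G 4 N)^(2*k) * (1 + 2*E)
        = ((G 1 N)^2 * G 2 N * (1 + 2*E)) * (G 4 N)^(2*k) := by ring
      _ = G 4 N * (G 4 N)^(2*k) := by rw [hKey]
      _ = (G 4 N)^m := by rw [hm, pow_succ, mul_comm]
  have hfinal : (G 4 N)^m * B = 1 + 2*E := by
    calc (G 4 N)^m * B = (((G 1 N)^(2*m) * (G 2 N)^m) * B) * (1 + 2*E) := by
          rw [← h1]; ring
      _ = 1 + 2*E := by rw [hAB, one_mul]
  rw [hcast, hfinal, map_add, coeff_one, if_neg hN, zero_add]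
  have h2C : (2 : PowerSeries (ZMod 4)) = C (R := ZMod 4) 2 := (map_ofNat (C (R := ZMod 4)) 2).symm
  rw [h2C, coeff_C_mul, hE, map_sum]
  congr 1
  apply Finset.sum_congr rfl
  intro i hi
  rw [coeff_X_pow_mul', if_pos (mem_Icc.mp hi).2, coeff_geom]

/-! ### Arithmetic lemmas -/

lemma even_card_divisors {N : ℕ} (hN : N ≠ 0) (h : ¬ IsSquare N) : Even N.divisors.card := by
  by_contra he
  rw [Nat.not_even_iff_odd] at he
  apply h
  rw [Nat.card_divisors hN] at he
  have hall : ∀ q ∈ N.primeFactors, Even (N.factorization q) := by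
    intro q hq
    have hdvd : (N.factorization q + 1) ∣ N.primeFactors.prod (N.factorization · + 1) :=
      Finset.dvd_prod_of_mem _ hq
    rcases Nat.even_or_odd (N.factorization q) with h' | h'
    · exact h'
    · exfalso
      rw [Nat.odd_iff] at he
      have : (2 : ℕ) ∣ N.factorization q + 1 := by
        rw [Nat.odd_iff] at h'; omega
      have h2 : (2:ℕ) ∣ N.primeFactors.prod (N.factorization · + 1) := this.trans hdvd
      rw [Nat.dvd_iff_mod_eq_zero] at h2
      omega
  have hfact : N = ∏ q ∈ N.primeFactors, q ^ (N.factorization q) := by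
    conv_lhs => rw [← Nat.factorization_prod_pow_eq_self hN]
    rw [Finsupp.prod, Nat.support_factorization]
  rw [hfact]
  exact Finset.isSquare_prod _ fun q hq => (hall q hq).isSquare_pow q

lemma dvd_iff_of_odd {N i : ℕ} (hodd : Odd N) (h2 : i ≤ N) :
    2*i ∣ N - i ↔ i ∣ N := by
  constructor
  · intro h
    have hi : i ∣ N - i := (dvd_mul_left i 2).trans h
    have := Nat.dvd_add hi (dvd_refl i)
    rwa [Nat.sub_add_cancel h2] at this
  · rintro ⟨c, rfl⟩
    have hc : Odd c := by
      rcases Nat.even_or_odd c with h' | h'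
      · exact absurd hodd (Nat.not_odd_iff_even.mpr (Even.mul_left h' i))
      · exact h'
    obtain ⟨d, hd⟩ := hc
    exact ⟨d, by rw [hd]; ring_nf; omega⟩

lemma sum_divisors_card (N : ℕ) (hN : N ≠ 0) :
    ∑ i ∈ Icc 1 N, (if i ∣ N then (1 : ZMod 4) else 0) = (N.divisors.card : ZMod 4) := by
  have hfe : Finset.filter (fun i => i ∣ N) (Icc 1 N) = N.divisors := by
    ext d
    simp only [Finset.mem_filter, Finset.mem_Icc, Nat.mem_divisors]
    constructor
    · rintro ⟨_, hd⟩; exact ⟨hd, hN⟩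
    · rintro ⟨hd, -⟩
      exact ⟨⟨Nat.pos_of_dvd_of_pos hd (Nat.pos_of_ne_zero hN),
        Nat.le_of_dvd (Nat.pos_of_ne_zero hN) hd⟩, hd⟩
  rw [Finset.sum_boole, hfe]

lemma two_mul_even_card {c : ℕ} (h : Even c) : 2 * ((c : ZMod 4)) = 0 := by
  obtain ⟨e, rfl⟩ := h
  push_cast
  ring_nf
  rw [show (4 : ZMod 4) = ((4:ℕ) : ZMod 4) by norm_cast, ZMod.natCast_self]
  ring

end Stmt19Aux

theorem stmt19 (p r R : ℕ) (hp : p.Prime) (hp3 : 3 ≤ p)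
    (hr1 : 1 ≤ r) (hr2 : r ≤ p - 1)
    (hnonres : ∀ x : ℤ, ¬ (x ^ 2 ≡ (r : ℤ) [ZMOD p]))
    (hR : R = if Odd r then r else p + r)
    (n k : ℕ) :
    b (2 * k + 1) (2 * p * n + R) ≡ 0 [ZMOD 4] := by
  open Stmt19Aux Finset in
  have hRodd : Odd R := by
    by_cases hodd : Odd r
    · rw [hR, if_pos hodd]; exact hodd
    · rw [hR, if_neg hodd]
      exact (hp.odd_of_ne_two (by omega)).add_even (Nat.not_odd_iff_even.mp hodd)
  set N := 2 * p * n + R with hN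
  have hN0 : N ≠ 0 := by
    have : R ≠ 0 := by rintro rfl; simp [Nat.odd_iff] at hRodd
    omega
  have hNodd : Odd N := by
    rw [hN]
    exact (Even.add_odd ⟨p * n, by ring⟩ hRodd)
  have hNsq : ¬ IsSquare N := by
    rintro ⟨a, ha⟩
    apply hnonres (a : ℤ)
    rw [Int.modEq_iff_dvd]
    have haN : ((a : ℤ))^2 = ((2 * p * n + R : ℕ) : ℤ) := by
      rw [sq]; exact_mod_cast ha.symm
    rw [haN]
    by_cases hodd : Odd r
    · rw [hR, if_pos hodd]
      exact ⟨-(2*(n:ℤ)), by push_cast; ring⟩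
    · rw [hR, if_neg hodd]
      exact ⟨-(2*(n:ℤ)+1), by push_cast; ring⟩
  have hmain := Stmt19Aux.main_coeff N (2*k+1) k rfl hN0
  have hsum : ∑ i ∈ Icc 1 N, (if 2*i ∣ N - i then (1:ZMod 4) else 0)
      = ∑ i ∈ Icc 1 N, (if i ∣ N then (1:ZMod 4) else 0) := by
    apply Finset.sum_congr rfl
    intro i hi
    rw [if_congr (dvd_iff_of_odd hNodd (mem_Icc.mp hi).2) rfl rfl]
  rw [Int.modEq_zero_iff_dvd, show (4:ℤ) = ((4:ℕ):ℤ) by norm_num,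
    ← ZMod.intCast_zmod_eq_zero_iff_dvd]
  rw [show ((b (2*k+1) N : ℤ) : ZMod 4) = ((b (2*k+1) N : ℤ) : ZMod 4) from rfl, hmain, hsum,
    sum_divisors_card N hN0]
  exact two_mul_even_card (even_card_divisors hN0 hNsq)
end
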